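/- arXiv:2309.03797 — 3 statements merged into one kernel-verified Lean document; each statement's English description precedes it below -/
import Mathlib

section
/- Let E be a measurable space, let X₁,…,X_{N₀}, X_{N₀+1} be independent, identically distributed E-valued random variables with common law μ, fix α ∈ (0,1) and L a positive integer, and let σ₁,…,σ_L : E → ℝ be measurable score functions such that for each l the pushforward of μ under σ_l is atomless. Define recursively k_l = ⌊α(N_{l−1}+1)⌋ and N_l = N_{l−1} − k_l for l = 1,…,L, and define thresholds iteratively: W₀ = {1,…,N₀}; for l = 1,…,L, if k_l ≥ 1 let t_l be the k_l-th smallest value among {σ_l(X_i) : i ∈ W_{l−1}} and let W_l be W_{l−1} with the k_l indices attaining those smallest values removed (almost surely well-defined since ties have probability zero), and if k_l = 0 set t_l = −∞ and W_l = W_{l−1}. Then P( σ_l(X_{N₀+1}) ≥ t_l for all l = 1,…,L ) ≥ (1−α)^L. -/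
open MeasureTheory ProbabilityTheory Finset

noncomputable section

/-- The `k`-th smallest value (1-indexed) attained by `f` on the finite index set `s`
(counted with multiplicity). -/
def kthSmallestVal {ι : Type*} (s : Finset ι) (f : ι → ℝ) (k : ℕ) : ℝ :=
  ((s.val.map f).sort (· ≤ ·)).getD (k - 1) 0

/-- Remove from `s` the `k` indices attaining the smallest values of `f`
(ties, which are almost surely absent, broken by the index order). -/
def removeKSmallest {ι : Type*} [LinearOrder ι] (s : Finset ι) (f : ι → ℝ) (k : ℕ) : Finset ι :=
  s.filter (fun i => k < (s.filter (fun j => f j < f i ∨ (f j = f i ∧ j ≤ i))).card)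

/-- The iteratively pruned index sets: `W_0` is everything, and `W_l` is `W_{l-1}` with the
`k_l` indices attaining the smallest values of `f l` removed. -/
def pruneSeq {ι : Type*} [LinearOrder ι] [Fintype ι] (f : ℕ → ι → ℝ) (k : ℕ → ℕ) :
    ℕ → Finset ι
  | 0 => Finset.univ
  | l + 1 => removeKSmallest (pruneSeq f k l) (f (l + 1)) (k (l + 1))

/-- The sequence `N_l` of remaining calibration sample sizes:
`N_0 = N₀` and `N_l = N_{l-1} - ⌊α (N_{l-1}+1)⌋`. -/
def conformalN (α : ℝ) (N0 : ℕ) : ℕ → ℕ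
  | 0 => N0
  | l + 1 => conformalN α N0 l - ⌊α * (conformalN α N0 l + 1)⌋₊

/-- The number of samples removed at step `l ≥ 1`: `k_l = ⌊α (N_{l-1}+1)⌋`. -/
def conformalK (α : ℝ) (N0 : ℕ) (l : ℕ) : ℕ := ⌊α * (conformalN α N0 (l - 1) + 1)⌋₊

open scoped ENNReal

section Comb

variable {ι : Type*} [LinearOrder ι]

/-- the tie-broken rank of `i` in `s` -/
def rankIn (s : Finset ι) (f : ι → ℝ) (i : ι) : ℕ :=
  (s.filter (fun j => f j < f i ∨ (f j = f i ∧ j ≤ i))).card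

lemma removeKSmallest_eq_rank (s : Finset ι) (f : ι → ℝ) (k : ℕ) :
    removeKSmallest s f k = s.filter (fun i => k < rankIn s f i) := rfl

lemma cond_iff_lex (f : ι → ℝ) (i j : ι) :
    (f j < f i ∨ (f j = f i ∧ j ≤ i)) ↔ toLex (f j, j) ≤ toLex (f i, i) := by
  rw [Prod.Lex.le_iff]
  exact Iff.rfl

lemma rankIn_lt_rankIn {s : Finset ι} {f : ι → ℝ} {i i' : ι} (hi : i ∈ s) (hi' : i' ∈ s)
    (h : toLex ((f i : ℝ), i) < toLex (f i', i')) : rankIn s f i < rankIn s f i' := by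
  classical
  apply Finset.card_lt_card
  constructor
  · intro j hj
    rw [Finset.mem_filter] at hj ⊢
    refine ⟨hj.1, ?_⟩
    rw [cond_iff_lex] at hj ⊢
    exact le_trans hj.2 h.le
  · intro hsub
    have hmem : i' ∈ s.filter (fun j => f j < f i' ∨ (f j = f i' ∧ j ≤ i')) := by
      rw [Finset.mem_filter]
      exact ⟨hi', Or.inr ⟨rfl, le_refl _⟩⟩
    have := hsub hmem
    rw [Finset.mem_filter, cond_iff_lex] at this
    exact absurd (lt_of_le_of_lt this.2 h) (lt_irrefl _)

lemma rankIn_injOn {s : Finset ι} {f : ι → ℝ} :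
    Set.InjOn (rankIn s f) s := by
  intro i hi i' hi' h
  by_contra hne
  rcases lt_or_gt_of_ne (fun hc : toLex ((f i : ℝ), i) = toLex (f i', i') => by
    have : i = i' := congrArg (fun p => (ofLex p).2) hc
    exact hne this) with hlt | hgt
  · exact absurd h (Nat.ne_of_lt (rankIn_lt_rankIn hi hi' hlt))
  · exact absurd h.symm (Nat.ne_of_lt (rankIn_lt_rankIn hi' hi hgt))

lemma one_le_rankIn {s : Finset ι} {f : ι → ℝ} {i : ι} (hi : i ∈ s) : 1 ≤ rankIn s f i := by
  have : i ∈ s.filter (fun j => f j < f i ∨ (f j = f i ∧ j ≤ i)) :=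
    Finset.mem_filter.2 ⟨hi, Or.inr ⟨rfl, le_refl _⟩⟩
  exact Finset.card_pos.2 ⟨i, this⟩

lemma rankIn_le_card {s : Finset ι} {f : ι → ℝ} (i : ι) : rankIn s f i ≤ s.card :=
  Finset.card_filter_le _ _

lemma image_rankIn (s : Finset ι) (f : ι → ℝ) :
    s.image (rankIn s f) = Finset.Icc 1 s.card := by
  classical
  apply Finset.eq_of_subset_of_card_le
  · intro r hr
    rw [Finset.mem_image] at hr
    obtain ⟨i, hi, rfl⟩ := hr
    exact Finset.mem_Icc.2 ⟨one_le_rankIn hi, rankIn_le_card i⟩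
  · rw [Nat.card_Icc, Finset.card_image_of_injOn rankIn_injOn]
    omega

lemma card_removeKSmallest (s : Finset ι) (f : ι → ℝ) {k : ℕ} (hk : k ≤ s.card) :
    (removeKSmallest s f k).card = s.card - k := by
  classical
  rw [removeKSmallest_eq_rank]
  have h1 : (s.filter (fun i => k < rankIn s f i)).card
      = ((s.image (rankIn s f)).filter (fun r => k < r)).card := by
    rw [Finset.filter_image, Finset.card_image_of_injOn (rankIn_injOn.mono (Finset.filter_subset _ _))]
  rw [h1, image_rankIn]
  have h2 : (Finset.Icc 1 s.card).filter (fun r => k < r) = Finset.Icc (k+1) s.card := by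
    ext r
    simp only [Finset.mem_filter, Finset.mem_Icc]
    omega
  rw [h2, Nat.card_Icc]
  omega

lemma removeKSmallest_subset (s : Finset ι) (f : ι → ℝ) (k : ℕ) :
    removeKSmallest s f k ⊆ s := Finset.filter_subset _ _

lemma removeKSmallest_zero (s : Finset ι) (f : ι → ℝ) :
    removeKSmallest s f 0 = s := by
  classical
  apply Finset.filter_true_of_mem
  intro i hi
  exact one_le_rankIn hi

end Comb

section Inj

variable {ι : Type*} [LinearOrder ι] {s : Finset ι} {f : ι → ℝ}

lemma filter_cond_eq_of_inj (hf : Function.Injective f) (i : ι) :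
    s.filter (fun j => f j < f i ∨ (f j = f i ∧ j ≤ i)) = s.filter (fun j => f j ≤ f i) := by
  classical
  apply Finset.filter_congr
  intro j _
  constructor
  · rintro (h | ⟨h, _⟩)
    · exact le_of_lt h
    · exact le_of_eq h
  · intro h
    rcases lt_or_eq_of_le h with h | h
    · exact Or.inl h
    · exact Or.inr ⟨h, le_of_eq (hf h)⟩

lemma mem_removeKSmallest_iff (hf : Function.Injective f) {k : ℕ} {i : ι} :
    i ∈ removeKSmallest s f k ↔ i ∈ s ∧ k < (s.filter (fun j => f j ≤ f i)).card := by
  rw [removeKSmallest, Finset.mem_filter]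
  constructor
  · rintro ⟨h1, h2⟩; rw [filter_cond_eq_of_inj hf i] at h2; exact ⟨h1, h2⟩
  · rintro ⟨h1, h2⟩; rw [← filter_cond_eq_of_inj hf i] at h2; exact ⟨h1, h2⟩

-- counting in a finset of a linear order
lemma card_filter_le_orderEmbOfFin {β : Type*} [LinearOrder β] (s' : Finset β) {n : ℕ}
    (h : s'.card = n) (i : Fin n) :
    (s'.filter (fun x => x ≤ s'.orderEmbOfFin h i)).card = (i : ℕ) + 1 := by
  classical
  have himg : s'.filter (fun x => x ≤ s'.orderEmbOfFin h i)
      = (Finset.univ.filter (fun j : Fin n => j ≤ i)).image (s'.orderEmbOfFin h) := by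
    ext x
    simp only [Finset.mem_filter, Finset.mem_image, Finset.mem_univ, true_and]
    constructor
    · rintro ⟨hx, hle⟩
      have : x ∈ Set.range (s'.orderEmbOfFin h) := by
        rw [Finset.range_orderEmbOfFin]; exact hx
      obtain ⟨j, rfl⟩ := this
      exact ⟨j, (s'.orderEmbOfFin h).le_iff_le.1 hle, rfl⟩
    · rintro ⟨j, hj, rfl⟩
      exact ⟨Finset.orderEmbOfFin_mem s' h j, (s'.orderEmbOfFin h).le_iff_le.2 hj⟩
  rw [himg, Finset.card_image_of_injective _ (s'.orderEmbOfFin h).injective]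
  have : Finset.univ.filter (fun j : Fin n => j ≤ i) = Finset.Iic i := by
    ext j; simp [Finset.mem_Iic]
  rw [this, Fin.card_Iic]

lemma card_filter_lt_orderEmbOfFin {β : Type*} [LinearOrder β] (s' : Finset β) {n : ℕ}
    (h : s'.card = n) (i : Fin n) :
    (s'.filter (fun x => x < s'.orderEmbOfFin h i)).card = (i : ℕ) := by
  classical
  have himg : s'.filter (fun x => x < s'.orderEmbOfFin h i)
      = (Finset.univ.filter (fun j : Fin n => j < i)).image (s'.orderEmbOfFin h) := by
    ext x
    simp only [Finset.mem_filter, Finset.mem_image, Finset.mem_univ, true_and]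
    constructor
    · rintro ⟨hx, hle⟩
      have : x ∈ Set.range (s'.orderEmbOfFin h) := by
        rw [Finset.range_orderEmbOfFin]; exact hx
      obtain ⟨j, rfl⟩ := this
      exact ⟨j, (s'.orderEmbOfFin h).lt_iff_lt.1 hle, rfl⟩
    · rintro ⟨j, hj, rfl⟩
      exact ⟨Finset.orderEmbOfFin_mem s' h j, (s'.orderEmbOfFin h).lt_iff_lt.2 hj⟩
  rw [himg, Finset.card_image_of_injective _ (s'.orderEmbOfFin h).injective]
  have : Finset.univ.filter (fun j : Fin n => j < i) = Finset.Iio i := by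
    ext j; simp [Finset.mem_Iio]
  rw [this, Fin.card_Iio]

lemma kthSmallestVal_eq_orderEmbOfFin (hf : Function.Injective f) {k : ℕ}
    (hk1 : 1 ≤ k) (hks : k ≤ s.card) :
    kthSmallestVal s f k
      = (s.image f).orderEmbOfFin (Finset.card_image_of_injective s hf)
          ⟨k - 1, by omega⟩ := by
  classical
  have hval : (s.image f).val = s.val.map f := by
    rw [Finset.image_val, Multiset.dedup_eq_self.2 (s.nodup.map hf)]
  have hsorteq : (s.val.map f).sort (· ≤ ·) = (s.image f).sort (· ≤ ·) := by
    rw [← hval]; rfl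
  have hlen : k - 1 < ((s.image f).sort (· ≤ ·)).length := by
    rw [Finset.length_sort, Finset.card_image_of_injective s hf]; omega
  rw [kthSmallestVal, hsorteq, Finset.orderEmbOfFin_apply, List.getD_eq_getElem _ _ hlen]
  rfl

lemma kthSmallestVal_spec (hf : Function.Injective f) {k : ℕ}
    (hk1 : 1 ≤ k) (hks : k ≤ s.card) :
    (∃ i0 ∈ s, f i0 = kthSmallestVal s f k)
      ∧ (s.filter (fun j => f j ≤ kthSmallestVal s f k)).card = k
      ∧ (s.filter (fun j => f j < kthSmallestVal s f k)).card = k - 1 := by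
  classical
  set s' := s.image f with hs'
  have hcard : s'.card = s.card := Finset.card_image_of_injective s hf
  rw [kthSmallestVal_eq_orderEmbOfFin hf hk1 hks]
  set i : Fin s.card := ⟨k - 1, by omega⟩ with hi
  set t := s'.orderEmbOfFin hcard i with ht
  refine ⟨?_, ?_, ?_⟩
  · obtain ⟨i0, hi0, hfi0⟩ := Finset.mem_image.1 (Finset.orderEmbOfFin_mem s' hcard i)
    exact ⟨i0, hi0, hfi0⟩
  · have hcomm : (s.filter (fun j => f j ≤ t)).card = (s'.filter (fun x => x ≤ t)).card := by
      rw [hs', Finset.filter_image, Finset.card_image_of_injective _ hf]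
    rw [hcomm, card_filter_le_orderEmbOfFin s' hcard i]
    simp [hi]; omega
  · have hcomm : (s.filter (fun j => f j < t)).card = (s'.filter (fun x => x < t)).card := by
      rw [hs', Finset.filter_image, Finset.card_image_of_injective _ hf]
    rw [hcomm, card_filter_lt_orderEmbOfFin s' hcard i]

lemma removeKSmallest_eq_filter_gt (hf : Function.Injective f) {k : ℕ}
    (hk1 : 1 ≤ k) (hks : k ≤ s.card) :
    removeKSmallest s f k = s.filter (fun i => kthSmallestVal s f k < f i) := by
  classical
  obtain ⟨⟨i0, hi0, hfi0⟩, hle, hlt⟩ := kthSmallestVal_spec hf hk1 hks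
  set t := kthSmallestVal s f k with ht
  ext i
  rw [mem_removeKSmallest_iff hf, Finset.mem_filter]
  constructor
  · rintro ⟨hi, hk⟩
    refine ⟨hi, ?_⟩
    by_contra hc
    push_neg at hc
    have hsub : s.filter (fun j => f j ≤ f i) ⊆ s.filter (fun j => f j ≤ t) := by
      intro j hj
      rw [Finset.mem_filter] at hj ⊢
      exact ⟨hj.1, hj.2.trans hc⟩
    have := Finset.card_le_card hsub
    omega
  · rintro ⟨hi, hti⟩
    refine ⟨hi, ?_⟩
    have hsub : insert i (s.filter (fun j => f j ≤ t)) ⊆ s.filter (fun j => f j ≤ f i) := by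
      intro j hj
      rcases Finset.mem_insert.1 hj with rfl | hj
      · exact Finset.mem_filter.2 ⟨hi, le_refl _⟩
      · rw [Finset.mem_filter] at hj ⊢
        exact ⟨hj.1, le_of_lt (lt_of_le_of_lt hj.2 hti)⟩
    have hnot : i ∉ s.filter (fun j => f j ≤ t) := by
      rw [Finset.mem_filter]; push_neg; intro _; exact hti
    have := Finset.card_le_card hsub
    rw [Finset.card_insert_of_notMem hnot, hle] at this
    omega

end Inj

section Step

variable {ι : Type*} [LinearOrder ι] [DecidableEq ι] {s : Finset ι} {f : ι → ℝ} {a : ι} {k : ℕ}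

lemma removeKSmallest_insert_of_pass (hf : Function.Injective f) (ha : a ∉ s)
    (hk1 : 1 ≤ k) (hks : k ≤ s.card) (hta : kthSmallestVal s f k < f a) :
    removeKSmallest (insert a s) f k = insert a (removeKSmallest s f k) := by
  classical
  obtain ⟨⟨i0, hi0, hfi0⟩, hle, hlt⟩ := kthSmallestVal_spec hf hk1 hks
  set t := kthSmallestVal s f k with ht
  ext i
  rw [mem_removeKSmallest_iff hf, Finset.mem_insert, Finset.mem_insert]
  constructor
  · rintro ⟨hi | hi, hcard⟩
    · exact Or.inl hi
    · right
      rw [removeKSmallest_eq_filter_gt hf hk1 hks, Finset.mem_filter, ← ht]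
      refine ⟨hi, ?_⟩
      by_contra hc
      push_neg at hc
      have hfa : ¬ (f a ≤ f i) := by push_neg; exact lt_of_le_of_lt hc hta
      have heq : (insert a s).filter (fun j => f j ≤ f i) = s.filter (fun j => f j ≤ f i) := by
        rw [Finset.filter_insert, if_neg hfa]
      rw [heq] at hcard
      have hsub : s.filter (fun j => f j ≤ f i) ⊆ s.filter (fun j => f j ≤ t) := by
        intro j hj
        rw [Finset.mem_filter] at hj ⊢
        exact ⟨hj.1, hj.2.trans hc⟩
      have := Finset.card_le_card hsub
      omega
  · intro hcase
    have key : ∀ x, x ∈ s ∨ x = a → t < f x → k < ((insert a s).filter (fun j => f j ≤ f x)).card := by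
      intro x _ htx
      have hsub : insert x (s.filter (fun j => f j ≤ t)) ⊆ (insert a s).filter (fun j => f j ≤ f x) := by
        intro j hj
        rcases Finset.mem_insert.1 hj with rfl | hj
        · rcases ‹j ∈ s ∨ j = a› with hjs | rfl
          · exact Finset.mem_filter.2 ⟨Finset.mem_insert_of_mem hjs, le_refl _⟩
          · exact Finset.mem_filter.2 ⟨Finset.mem_insert_self _ _, le_refl _⟩
        · rw [Finset.mem_filter] at hj
          exact Finset.mem_filter.2 ⟨Finset.mem_insert_of_mem hj.1, hj.2.trans htx.le⟩
      have hnot : x ∉ s.filter (fun j => f j ≤ t) := by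
        rw [Finset.mem_filter]; push_neg; intro _; exact htx
      have := Finset.card_le_card hsub
      rw [Finset.card_insert_of_notMem hnot, hle] at this
      omega
    rcases hcase with rfl | hi
    · exact ⟨Or.inl rfl, key i (Or.inr rfl) hta⟩
    · rw [removeKSmallest_eq_filter_gt hf hk1 hks, Finset.mem_filter, ← ht] at hi
      exact ⟨Or.inr hi.1, key i (Or.inl hi.1) hi.2⟩

lemma not_mem_removeKSmallest_insert_of_fail (hf : Function.Injective f) (ha : a ∉ s)
    (hk1 : 1 ≤ k) (hks : k ≤ s.card) (hta : f a < kthSmallestVal s f k) :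
    a ∉ removeKSmallest (insert a s) f k := by
  classical
  obtain ⟨⟨i0, hi0, hfi0⟩, hle, hlt⟩ := kthSmallestVal_spec hf hk1 hks
  set t := kthSmallestVal s f k with ht
  rw [mem_removeKSmallest_iff hf]
  push_neg
  intro _
  have heq : (insert a s).filter (fun j => f j ≤ f a) = insert a (s.filter (fun j => f j ≤ f a)) := by
    rw [Finset.filter_insert, if_pos (le_refl _)]
  have hnot : a ∉ s.filter (fun j => f j ≤ f a) := fun h => ha (Finset.mem_filter.1 h).1
  have hsub : s.filter (fun j => f j ≤ f a) ⊆ s.filter (fun j => f j < t) := by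
    intro j hj
    rw [Finset.mem_filter] at hj ⊢
    exact ⟨hj.1, lt_of_le_of_lt hj.2 hta⟩
  have hcle := Finset.card_le_card hsub
  rw [heq, Finset.card_insert_of_notMem hnot]
  omega

end Step

section Prune

variable {ι : Type*} [LinearOrder ι] [Fintype ι]

def pruneFrom (s : Finset ι) (f : ℕ → ι → ℝ) (k : ℕ → ℕ) : ℕ → Finset ι
  | 0 => s
  | l + 1 => removeKSmallest (pruneFrom s f k l) (f (l + 1)) (k (l + 1))

lemma pruneFrom_subset (s : Finset ι) (f : ℕ → ι → ℝ) (k : ℕ → ℕ) (l : ℕ) :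
    pruneFrom s f k l ⊆ s := by
  induction l with
  | zero => exact Finset.Subset.refl _
  | succ l ih => exact (removeKSmallest_subset _ _ _).trans ih

lemma pruneFrom_card (s : Finset ι) (f : ℕ → ι → ℝ) (k : ℕ → ℕ) {N : ℕ → ℕ} {l : ℕ}
    (h0 : s.card = N 0) (hk : ∀ m < l, k (m + 1) ≤ N m)
    (hN : ∀ m < l, N (m + 1) = N m - k (m + 1)) :
    (pruneFrom s f k l).card = N l := by
  induction l with
  | zero => exact h0
  | succ l ih =>
    have ihl := ih (fun m hm => hk m (Nat.lt_succ_of_lt hm)) (fun m hm => hN m (Nat.lt_succ_of_lt hm))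
    show (removeKSmallest (pruneFrom s f k l) (f (l+1)) (k (l+1))).card = N (l+1)
    rw [card_removeKSmallest _ _ (by rw [ihl]; exact hk l (Nat.lt_succ_self l)), ihl,
      hN l (Nat.lt_succ_self l)]

/-- Main deterministic lemma: the test index `a` survives the augmented pruning iff its scores
pass all the calibration thresholds; moreover in that case the augmented pruned sets are the
calibration pruned sets plus `a`. -/
lemma survive_iff [DecidableEq ι] (a : ι) (f : ℕ → ι → ℝ) (k : ℕ → ℕ) (L : ℕ)
    (hinj : ∀ m, 1 ≤ m → m ≤ L → Function.Injective (f m))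
    {N : ℕ → ℕ} (h0 : (Finset.univ.erase a).card = N 0)
    (hk : ∀ m < L, k (m + 1) ≤ N m) (hN : ∀ m < L, N (m + 1) = N m - k (m + 1)) :
    (a ∈ pruneFrom Finset.univ f k L ↔ ∀ m, 1 ≤ m → m ≤ L → (k m = 0 ∨
        kthSmallestVal (pruneFrom (Finset.univ.erase a) f k (m - 1)) (f m) (k m) < f m a))
      ∧ (a ∈ pruneFrom Finset.univ f k L →
        pruneFrom Finset.univ f k L = insert a (pruneFrom (Finset.univ.erase a) f k L)) := by
  classical
  induction L with
  | zero =>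
    refine ⟨⟨fun _ m h1 h2 => absurd (h1.trans h2) (by omega), fun _ => Finset.mem_univ a⟩, ?_⟩
    intro _
    show Finset.univ = insert a (Finset.univ.erase a)
    rw [Finset.insert_erase (Finset.mem_univ a)]
  | succ l ih =>
    have ihl := ih (fun m h1 h2 => hinj m h1 (h2.trans (Nat.le_succ l)))
      (fun m hm => hk m (Nat.lt_succ_of_lt hm)) (fun m hm => hN m (Nat.lt_succ_of_lt hm))
    have hcal_card : (pruneFrom (Finset.univ.erase a) f k l).card = N l :=
      pruneFrom_card _ _ _ h0 (fun m hm => hk m (Nat.lt_succ_of_lt hm))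
        (fun m hm => hN m (Nat.lt_succ_of_lt hm))
    have ha_not_cal : ∀ l', a ∉ pruneFrom (Finset.univ.erase a) f k l' := by
      intro l' h
      exact absurd (pruneFrom_subset _ _ _ _ h) (Finset.notMem_erase a _)
    by_cases hk0 : k (l + 1) = 0
    · -- trivial step
      have haug : pruneFrom Finset.univ f k (l+1) = pruneFrom Finset.univ f k l := by
        show removeKSmallest _ _ (k (l+1)) = _
        rw [hk0, removeKSmallest_zero]
      have hcal : pruneFrom (Finset.univ.erase a) f k (l+1)
          = pruneFrom (Finset.univ.erase a) f k l := by
        show removeKSmallest _ _ (k (l+1)) = _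
        rw [hk0, removeKSmallest_zero]
      rw [haug, hcal]
      constructor
      · rw [ihl.1]
        constructor
        · intro h m h1 h2
          rcases Nat.lt_succ_iff_lt_or_eq.1 (Nat.lt_succ_of_le h2) with h2' | rfl
          · exact h m h1 (by omega)
          · exact Or.inl hk0
        · intro h m h1 h2
          exact h m h1 (h2.trans (Nat.le_succ l))
      · exact ihl.2
    · -- nontrivial step
      have hk1 : 1 ≤ k (l + 1) := Nat.one_le_iff_ne_zero.2 hk0
      have hfinj := hinj (l+1) (by omega) (le_refl _)
      have hks : k (l + 1) ≤ (pruneFrom (Finset.univ.erase a) f k l).card := by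
        rw [hcal_card]; exact hk l (Nat.lt_succ_self l)
      set t := kthSmallestVal (pruneFrom (Finset.univ.erase a) f k l) (f (l+1)) (k (l+1)) with htdef
      obtain ⟨⟨i0, hi0, hfi0⟩, -, -⟩ := kthSmallestVal_spec hfinj hk1 hks
      have htne : t ≠ f (l+1) a := by
        intro hc
        have : i0 = a := hfinj (hfi0.trans hc)
        exact ha_not_cal l (this ▸ hi0)
      by_cases haug_l : a ∈ pruneFrom Finset.univ f k l
      · have heq_l := ihl.2 haug_l
        rcases lt_or_ge t (f (l+1) a) with hpass | hfail
        · -- passes step l+1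
          have hstep : pruneFrom Finset.univ f k (l+1)
              = insert a (pruneFrom (Finset.univ.erase a) f k (l+1)) := by
            show removeKSmallest (pruneFrom Finset.univ f k l) (f (l+1)) (k (l+1)) = _
            rw [heq_l, removeKSmallest_insert_of_pass hfinj (ha_not_cal l) hk1 hks hpass]
            rfl
          constructor
          · rw [hstep]
            constructor
            · intro _ m h1 h2
              rcases Nat.lt_succ_iff_lt_or_eq.1 (Nat.lt_succ_of_le h2) with h2' | rfl
              · exact (ihl.1.1 haug_l) m h1 (by omega)
              · right
                simpa using hpass
            · intro _
              exact Finset.mem_insert_self _ _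
          · intro _
            exact hstep
        · -- fails step l+1 (strictly, since no ties)
          have hfail' : f (l+1) a < t := lt_of_le_of_ne hfail (fun h => htne h.symm)
          have hnot : a ∉ pruneFrom Finset.univ f k (l+1) := by
            show a ∉ removeKSmallest (pruneFrom Finset.univ f k l) (f (l+1)) (k (l+1))
            rw [heq_l]
            exact not_mem_removeKSmallest_insert_of_fail hfinj (ha_not_cal l) hk1 hks hfail'
          constructor
          · constructor
            · intro h; exact absurd h hnot
            · intro h
              rcases h (l+1) (by omega) (le_refl _) with h' | h'
              · exact absurd h' hk0
              · exact absurd (by simpa using h') (not_lt.2 hfail)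
          · intro h; exact absurd h hnot
      · -- already failed earlier
        have hnot : a ∉ pruneFrom Finset.univ f k (l+1) := by
          intro h
          exact haug_l (removeKSmallest_subset _ _ _ h)
        constructor
        · constructor
          · intro h; exact absurd h hnot
          · intro h
            exact absurd ((ihl.1.2) (fun m h1 h2 => h m h1 (h2.trans (Nat.le_succ l)))) haug_l
        · intro h; exact absurd h hnot

end Prune

section MapLemmas

variable {ι ι' : Type*} [LinearOrder ι] [LinearOrder ι']

lemma filter_cond_map_card (e : ι ↪o ι') (s : Finset ι) (g : ι' → ℝ) (i : ι) :
    ((s.map e.toEmbedding).filter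
        (fun j => g j < g (e i) ∨ (g j = g (e i) ∧ j ≤ e i))).card
      = (s.filter (fun j => g (e j) < g (e i) ∨ (g (e j) = g (e i) ∧ j ≤ i))).card := by
  classical
  rw [Finset.filter_map, Finset.card_map]
  congr 1
  apply Finset.filter_congr
  intro j _
  simp only [Function.comp, RelEmbedding.coe_toEmbedding, e.le_iff_le]

lemma removeKSmallest_map (e : ι ↪o ι') (s : Finset ι) (g : ι' → ℝ) (k : ℕ) :
    removeKSmallest (s.map e.toEmbedding) g k
      = (removeKSmallest s (fun i => g (e i)) k).map e.toEmbedding := by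
  classical
  unfold removeKSmallest
  rw [Finset.filter_map]
  congr 1
  apply Finset.filter_congr
  intro i _
  simp only [Function.comp, RelEmbedding.coe_toEmbedding]
  rw [filter_cond_map_card e s g i]

lemma kthSmallestVal_map (e : ι ↪o ι') (s : Finset ι) (g : ι' → ℝ) (k : ℕ) :
    kthSmallestVal (s.map e.toEmbedding) g k = kthSmallestVal s (fun i => g (e i)) k := by
  rw [kthSmallestVal, kthSmallestVal, Finset.map_val, Multiset.map_map]
  rfl

variable [Fintype ι] [Fintype ι']

lemma pruneFrom_map (e : ι ↪o ι') (s : Finset ι) (f : ℕ → ι' → ℝ) (k : ℕ → ℕ) (l : ℕ) :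
    pruneFrom (s.map e.toEmbedding) f k l
      = (pruneFrom s (fun m i => f m (e i)) k l).map e.toEmbedding := by
  induction l with
  | zero => rfl
  | succ l ih =>
    show removeKSmallest (pruneFrom (s.map e.toEmbedding) f k l) (f (l+1)) (k (l+1)) = _
    rw [ih, removeKSmallest_map]
    rfl

end MapLemmas

section Equivariance

variable {ι : Type*} [LinearOrder ι] [Fintype ι]

lemma removeKSmallest_equiv (τ : Equiv.Perm ι) (s : Finset ι) {g : ι → ℝ}
    (hg : Function.Injective g) (k : ℕ) (j : ι) :
    j ∈ removeKSmallest (s.map τ.symm.toEmbedding) (fun i => g (τ i)) k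
      ↔ τ j ∈ removeKSmallest s g k := by
  classical
  rw [mem_removeKSmallest_iff (f := fun i => g (τ i)) (hg.comp τ.injective),
    mem_removeKSmallest_iff hg]
  have hmem : j ∈ s.map τ.symm.toEmbedding ↔ τ j ∈ s := by
    rw [Finset.mem_map_equiv]
    simp
  rw [hmem]
  have hcard : ((s.map τ.symm.toEmbedding).filter (fun j' => g (τ j') ≤ g (τ j))).card
      = (s.filter (fun j' => g j' ≤ g (τ j))).card := by
    rw [Finset.filter_map]
    rw [Finset.card_map]
    congr 1
    apply Finset.filter_congr
    intro j' _
    simp only [Function.comp, Equiv.toEmbedding_apply, Equiv.apply_symm_apply]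
  rw [hcard]

lemma pruneFrom_univ_equiv (τ : Equiv.Perm ι) {f : ℕ → ι → ℝ} (k : ℕ → ℕ) {L : ℕ}
    (hinj : ∀ m, 1 ≤ m → m ≤ L → Function.Injective (f m)) : ∀ (j : ι),
    (j ∈ pruneFrom Finset.univ (fun m i => f m (τ i)) k L
      ↔ τ j ∈ pruneFrom Finset.univ f k L) := by
  classical
  induction L with
  | zero => intro j; simp [pruneFrom]
  | succ l ih =>
    intro j
    have ihl := ih (fun m h1 h2 => hinj m h1 (h2.trans (Nat.le_succ l)))
    have hset : pruneFrom Finset.univ (fun m i => f m (τ i)) k l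
        = (pruneFrom Finset.univ f k l).map τ.symm.toEmbedding := by
      ext j'
      rw [Finset.mem_map_equiv]
      simp only [Equiv.symm_symm]
      exact ihl j'
    show j ∈ removeKSmallest (pruneFrom Finset.univ (fun m i => f m (τ i)) k l)
        (fun i => f (l+1) (τ i)) (k (l+1)) ↔ _
    rw [hset, removeKSmallest_equiv τ _ (hinj (l+1) (by omega) (le_refl _))]
    rfl

end Equivariance

section Arith

variable {α : ℝ} {N0 : ℕ}

lemma conformalN_succ_eq (α : ℝ) (N0 l : ℕ) :
    conformalN α N0 (l + 1) = conformalN α N0 l - conformalK α N0 (l + 1) := by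
  simp [conformalN, conformalK]

lemma conformalK_succ_le (hα : α ∈ Set.Ioo (0:ℝ) 1) (l : ℕ) :
    conformalK α N0 (l + 1) ≤ conformalN α N0 l := by
  have hpos : (0:ℝ) < (conformalN α N0 l : ℝ) + 1 := by positivity
  have hlt : α * ((conformalN α N0 l : ℝ) + 1) < (conformalN α N0 l : ℝ) + 1 := by
    nlinarith [hα.1, hα.2]
  have := (Nat.floor_lt (le_of_lt (mul_pos hα.1 hpos))).2 (by
    calc α * ((conformalN α N0 l : ℝ) + 1) < (conformalN α N0 l : ℝ) + 1 := hlt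
    _ = ((conformalN α N0 l + 1 : ℕ) : ℝ) := by push_cast; ring)
  show ⌊α * ((conformalN α N0 ((l+1) - 1) : ℝ) + 1)⌋₊ ≤ conformalN α N0 l
  simpa using Nat.lt_succ_iff.1 this

lemma conformal_pow_le (hα : α ∈ Set.Ioo (0:ℝ) 1) (N0 : ℕ) :
    ∀ l : ℕ, (1 - α) ^ l * ((N0 : ℝ) + 1) ≤ (conformalN α N0 l : ℝ) + 1 := by
  intro l
  induction l with
  | zero => simp [conformalN]
  | succ l ih =>
    have h1α : (0:ℝ) ≤ 1 - α := by linarith [hα.2]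
    have hkle := conformalK_succ_le (N0 := N0) hα l
    have hfloor : (conformalK α N0 (l+1) : ℝ) ≤ α * ((conformalN α N0 l : ℝ) + 1) := by
      have : conformalK α N0 (l+1) = ⌊α * ((conformalN α N0 l : ℝ) + 1)⌋₊ := by
        simp [conformalK]
      rw [this]
      exact Nat.floor_le (mul_nonneg hα.1.le (by positivity))
    have hcast : ((conformalN α N0 (l+1) : ℕ) : ℝ)
        = (conformalN α N0 l : ℝ) - (conformalK α N0 (l+1) : ℝ) := by
      rw [conformalN_succ_eq]
      push_cast [Nat.cast_sub hkle]
      ring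
    calc (1 - α) ^ (l+1) * ((N0 : ℝ) + 1)
        = (1 - α) * ((1 - α) ^ l * ((N0 : ℝ) + 1)) := by ring
      _ ≤ (1 - α) * ((conformalN α N0 l : ℝ) + 1) := by
          exact mul_le_mul_of_nonneg_left ih h1α
      _ = ((conformalN α N0 l : ℝ) + 1) - α * ((conformalN α N0 l : ℝ) + 1) := by ring
      _ ≤ ((conformalN α N0 l : ℝ) + 1) - (conformalK α N0 (l+1) : ℝ) := by linarith
      _ = (conformalN α N0 (l+1) : ℝ) + 1 := by rw [hcast]; ring

end Arith

section Transfer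

lemma pruneSeq_eq_pruneFrom {ι : Type*} [LinearOrder ι] [Fintype ι]
    (f : ℕ → ι → ℝ) (k : ℕ → ℕ) (l : ℕ) :
    pruneSeq f k l = pruneFrom Finset.univ f k l := by
  induction l with
  | zero => rfl
  | succ l ih => show removeKSmallest (pruneSeq f k l) _ _ = _; rw [ih]; rfl

lemma univ_erase_last_eq (n : ℕ) :
    (Finset.univ : Finset (Fin (n+1))).erase (Fin.last n)
      = (Finset.univ : Finset (Fin n)).map Fin.castSuccOrderEmb.toEmbedding := by
  ext i
  simp only [Finset.mem_erase, Finset.mem_univ, and_true, Finset.mem_map,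
    RelEmbedding.coe_toEmbedding]
  constructor
  · intro h
    obtain ⟨j, rfl⟩ := Fin.exists_castSucc_eq.2 h
    exact ⟨j, trivial, rfl⟩
  · rintro ⟨j, -, rfl⟩
    show Fin.castSucc j ≠ Fin.last n
    exact (Fin.exists_castSucc_eq.1 ⟨j, rfl⟩)

lemma pruneFrom_erase_last {n : ℕ} (f : ℕ → Fin (n+1) → ℝ) (k : ℕ → ℕ) (l : ℕ) :
    pruneFrom ((Finset.univ : Finset (Fin (n+1))).erase (Fin.last n)) f k l
      = (pruneSeq (fun m (i : Fin n) => f m i.castSucc) k l).map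
          Fin.castSuccOrderEmb.toEmbedding := by
  rw [univ_erase_last_eq, pruneFrom_map, pruneSeq_eq_pruneFrom]
  rfl

lemma kthSmallestVal_erase_last {n : ℕ} (f : ℕ → Fin (n+1) → ℝ) (k : ℕ → ℕ) (l m : ℕ) :
    kthSmallestVal (pruneFrom ((Finset.univ : Finset (Fin (n+1))).erase (Fin.last n)) f k l)
        (f m) (k m)
      = kthSmallestVal (pruneSeq (fun m' (i : Fin n) => f m' i.castSucc) k l)
          (fun i : Fin n => f m i.castSucc) (k m) := by
  rw [pruneFrom_erase_last, kthSmallestVal_map]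
  rfl

end Transfer

section Meas

variable {E : Type*} [MeasurableSpace E]

lemma measurable_pruneMem (σ : ℕ → E → ℝ) (k : ℕ → ℕ) {N0 L : ℕ}
    (hσ : ∀ m ∈ Finset.Icc 1 L, Measurable (σ m)) :
    ∀ l, l ≤ L → ∀ i : Fin (N0+1),
      MeasurableSet {v : Fin (N0+1) → E |
        i ∈ pruneFrom Finset.univ (fun m j => σ m (v j)) k l} := by
  intro l
  induction l with
  | zero =>
    intro _ i
    have : {v : Fin (N0+1) → E | i ∈ pruneFrom Finset.univ (fun m j => σ m (v j)) k 0}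
        = Set.univ := by
      ext v; simp [pruneFrom]
    rw [this]; exact MeasurableSet.univ
  | succ l ih =>
    intro hl i
    have hmem := ih (by omega)
    have hσm := hσ (l+1) (Finset.mem_Icc.2 ⟨by omega, hl⟩)
    classical
    have hset : {v : Fin (N0+1) → E | i ∈ pruneFrom Finset.univ (fun m j => σ m (v j)) k (l+1)}
        = {v : Fin (N0+1) → E | i ∈ pruneFrom Finset.univ (fun m j => σ m (v j)) k l} ∩
          (⋃ (T : Finset (Fin (N0+1))) (_ : T.card = k (l+1) + 1),
            ⋂ j ∈ T,
              ({v : Fin (N0+1) → E | j ∈ pruneFrom Finset.univ (fun m j' => σ m (v j')) k l} ∩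
               {v : Fin (N0+1) → E | σ (l+1) (v j) < σ (l+1) (v i)
                  ∨ (σ (l+1) (v j) = σ (l+1) (v i) ∧ j ≤ i)})) := by
      ext v
      simp only [Set.mem_inter_iff, Set.mem_setOf_eq, Set.mem_iUnion, Set.mem_iInter]
      show i ∈ removeKSmallest (pruneFrom Finset.univ (fun m j => σ m (v j)) k l)
          (fun j => σ (l+1) (v j)) (k (l+1)) ↔ _
      rw [removeKSmallest, Finset.mem_filter]
      constructor
      · rintro ⟨h1, h2⟩
        refine ⟨h1, ?_⟩
        obtain ⟨T, hTsub, hTcard⟩ := Finset.exists_subset_card_eq (n := k (l+1) + 1) h2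
        refine ⟨T, hTcard, fun j hj => ?_⟩
        have := hTsub hj
        rw [Finset.mem_filter] at this
        exact ⟨this.1, this.2⟩
      · rintro ⟨h1, T, hTcard, hT⟩
        refine ⟨h1, ?_⟩
        have hsub : T ⊆ (pruneFrom Finset.univ (fun m j => σ m (v j)) k l).filter
            (fun j => σ (l+1) (v j) < σ (l+1) (v i)
              ∨ (σ (l+1) (v j) = σ (l+1) (v i) ∧ j ≤ i)) :=
          fun j hj => Finset.mem_filter.2 ⟨(hT j hj).1, (hT j hj).2⟩
        have := Finset.card_le_card hsub
        omega
    rw [hset]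
    apply MeasurableSet.inter (hmem i)
    apply MeasurableSet.iUnion
    intro T
    apply MeasurableSet.iUnion
    intro _
    apply MeasurableSet.biInter T.countable_toSet
    intro j _
    apply MeasurableSet.inter (hmem j)
    have hj' : Measurable fun v : Fin (N0+1) → E => σ (l+1) (v j) :=
      hσm.comp (measurable_pi_apply j)
    have hi' : Measurable fun v : Fin (N0+1) → E => σ (l+1) (v i) :=
      hσm.comp (measurable_pi_apply i)
    have hcond : {v : Fin (N0+1) → E | σ (l+1) (v j) < σ (l+1) (v i)
          ∨ (σ (l+1) (v j) = σ (l+1) (v i) ∧ j ≤ i)}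
        = if j ≤ i then {v : Fin (N0+1) → E | σ (l+1) (v j) ≤ σ (l+1) (v i)}
          else {v : Fin (N0+1) → E | σ (l+1) (v j) < σ (l+1) (v i)} := by
      split_ifs with h
      · ext v
        simp only [Set.mem_setOf_eq]
        constructor
        · rintro (hc | ⟨hc, -⟩)
          · exact le_of_lt hc
          · exact le_of_eq hc
        · intro hc
          rcases lt_or_eq_of_le hc with hc | hc
          · exact Or.inl hc
          · exact Or.inr ⟨hc, h⟩
      · ext v
        simp only [Set.mem_setOf_eq]
        constructor
        · rintro (hc | ⟨-, hc⟩)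
          · exact hc
          · exact absurd hc h
        · exact Or.inl
    rw [hcond]
    split_ifs with h
    · exact measurableSet_le hj' hi'
    · exact measurableSet_lt hj' hi'

end Meas

/-- **Dynamic conformal beam coverage guarantee** (Proposition 2).
Given i.i.d. samples `X 1, …, X N₀, X (N₀+1)` with law `μ`, per-step scores `σ l` with atomless
pushforwards, and the iteratively calibrated thresholds
`t_l = (k_l)`-th smallest of `σ l` on `W_{l-1}` (with `t_l = ⊥` if `k_l = 0`, where
`k_l = ⌊α(N_{l-1}+1)⌋`, `N_l = N_{l-1} - k_l`), the probability that the fresh sample passes all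
`L` thresholds is at least `(1-α)^L`. -/
theorem dynamic_conformal_beam_coverage
    {Ω E : Type*} [MeasurableSpace Ω] [MeasurableSpace E]
    (P : Measure Ω) [IsProbabilityMeasure P]
    (N0 : ℕ) (hN0 : 0 < N0)
    (X : Fin (N0 + 1) → Ω → E)
    (hXmeas : ∀ i, Measurable (X i))
    (hXindep : iIndepFun X P)
    (μ : Measure E) (hXlaw : ∀ i, P.map (X i) = μ)
    (α : ℝ) (hα : α ∈ Set.Ioo (0 : ℝ) 1)
    (L : ℕ) (hL : 0 < L)
    (σ : ℕ → E → ℝ)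
    (hσmeas : ∀ l ∈ Finset.Icc 1 L, Measurable (σ l))
    (hatomless : ∀ l ∈ Finset.Icc 1 L, NoAtoms (μ.map (σ l))) :
    (1 - α) ^ L ≤
      (P {ω | ∀ l ∈ Finset.Icc 1 L,
        (if conformalK α N0 l = 0 then (⊥ : EReal) else
          ((kthSmallestVal
              (pruneSeq (fun m (i : Fin N0) => σ m (X i.castSucc ω)) (conformalK α N0) (l - 1))
              (fun (i : Fin N0) => σ l (X i.castSucc ω)) (conformalK α N0 l) : ℝ) : EReal))
          ≤ ((σ l (X (Fin.last N0) ω) : ℝ) : EReal)}).toReal := by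
  classical
  have hk_le : ∀ m, conformalK α N0 (m+1) ≤ conformalN α N0 m := conformalK_succ_le hα
  have hN_succ : ∀ m, conformalN α N0 (m+1) = conformalN α N0 m - conformalK α N0 (m+1) :=
    conformalN_succ_eq α N0
  haveI hμprob : IsProbabilityMeasure μ := by
    rw [← hXlaw 0]; exact Measure.isProbabilityMeasure_map (hXmeas 0).aemeasurable
  set Y : Ω → (Fin (N0+1) → E) := fun ω i => X i ω with hYdef
  have hYmeas : Measurable Y := measurable_pi_lambda _ hXmeas
  set π : Measure (Fin (N0+1) → E) := Measure.pi (fun _ => μ) with hπdef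
  haveI : IsProbabilityMeasure π := by rw [hπdef]; infer_instance
  -- the law of the joint vector is the product measure
  have hYlaw : P.map Y = π := by
    rw [hπdef]
    refine (Measure.pi_eq (μ := fun _ => μ) fun s hs => ?_).symm
    rw [Measure.map_apply hYmeas (MeasurableSet.univ_pi hs)]
    have hpre : Y ⁻¹' (Set.univ.pi s) = ⋂ i ∈ (Finset.univ : Finset (Fin (N0+1))), X i ⁻¹' s i := by
      ext ω
      simp [Set.mem_pi, hYdef]
    rw [hpre, hXindep.measure_inter_preimage_eq_mul Finset.univ (fun i _ => hs i)]
    refine Finset.prod_congr rfl fun i _ => ?_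
    rw [← hXlaw i, Measure.map_apply (hXmeas i) (hs i)]
  -- the survival events
  set A : Fin (N0+1) → Set (Fin (N0+1) → E) := fun i =>
    {v | i ∈ pruneFrom Finset.univ (fun m j => σ m (v j)) (conformalK α N0) L} with hAdef
  have hA : ∀ i, MeasurableSet (A i) := fun i =>
    measurable_pruneMem σ (conformalK α N0) hσmeas L (le_refl L) i
  -- the set of score ties is null
  set D : Set (Fin (N0+1) → E) :=
    ⋃ (m : ℕ) (_ : m ∈ Finset.Icc 1 L) (i : Fin (N0+1)) (j : Fin (N0+1)) (_ : i ≠ j),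
      {v | σ m (v i) = σ m (v j)} with hDdef
  have hD : MeasurableSet D := by
    refine MeasurableSet.iUnion fun m => MeasurableSet.iUnion fun hm => ?_
    refine MeasurableSet.iUnion fun i => MeasurableSet.iUnion fun j =>
      MeasurableSet.iUnion fun _ => ?_
    exact measurableSet_eq_fun ((hσmeas m hm).comp (measurable_pi_apply i))
      ((hσmeas m hm).comp (measurable_pi_apply j))
  have hpair : ∀ m ∈ Finset.Icc 1 L, ∀ i j : Fin (N0+1), i ≠ j →
      P {ω | σ m (X i ω) = σ m (X j ω)} = 0 := by
    intro m hm i j hij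
    have hf : Measurable fun ω => σ m (X i ω) := (hσmeas m hm).comp (hXmeas i)
    have hg : Measurable fun ω => σ m (X j ω) := (hσmeas m hm).comp (hXmeas j)
    have hind : IndepFun (fun ω => σ m (X i ω)) (fun ω => σ m (X j ω)) P :=
      (hXindep.indepFun hij).comp (hσmeas m hm) (hσmeas m hm)
    have hmap := (indepFun_iff_map_prod_eq_prod_map_map hf.aemeasurable hg.aemeasurable).1 hind
    have hlawi : P.map (fun ω => σ m (X i ω)) = μ.map (σ m) := by
      rw [← hXlaw i, Measure.map_map (hσmeas m hm) (hXmeas i)]; rfl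
    have hlawj : P.map (fun ω => σ m (X j ω)) = μ.map (σ m) := by
      rw [← hXlaw j, Measure.map_map (hσmeas m hm) (hXmeas j)]; rfl
    have hdiag : MeasurableSet {p : ℝ × ℝ | p.1 = p.2} :=
      measurableSet_eq_fun measurable_fst measurable_snd
    have hps : {ω | σ m (X i ω) = σ m (X j ω)}
        = (fun ω => (σ m (X i ω), σ m (X j ω))) ⁻¹' {p : ℝ × ℝ | p.1 = p.2} := rfl
    rw [hps, ← Measure.map_apply (hf.prodMk hg) hdiag, hmap, hlawi, hlawj]
    haveI : NullSingletonClass (μ.map (σ m)) := hatomless m hm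
    rw [Measure.prod_apply hdiag]
    have hzero : ∀ x : ℝ, (μ.map (σ m)) (Prod.mk x ⁻¹' {p : ℝ × ℝ | p.1 = p.2}) = 0 := by
      intro x
      have : Prod.mk x ⁻¹' {p : ℝ × ℝ | p.1 = p.2} = {x} := by
        ext y; simp [eq_comm]
      rw [this]
      exact measure_singleton x
    simp [hzero]
  have hDnull : π D = 0 := by
    rw [← hYlaw, Measure.map_apply hYmeas hD]
    rw [hDdef]
    simp only [Set.preimage_iUnion]
    refine measure_iUnion_null fun m => measure_iUnion_null fun hm =>
      measure_iUnion_null fun i => measure_iUnion_null fun j => measure_iUnion_null fun hij => ?_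
    exact hpair m hm i j hij
  -- tie-free vectors have injective scores
  have hvD : ∀ v : Fin (N0+1) → E, v ∉ D → ∀ m, 1 ≤ m → m ≤ L →
      Function.Injective (fun i : Fin (N0+1) => σ m (v i)) := by
    intro v hv m h1 h2 i j hij
    by_contra hne
    exact hv (Set.mem_iUnion.2 ⟨m, Set.mem_iUnion.2 ⟨Finset.mem_Icc.2 ⟨h1, h2⟩,
      Set.mem_iUnion.2 ⟨i, Set.mem_iUnion.2 ⟨j, Set.mem_iUnion.2 ⟨hne, hij⟩⟩⟩⟩⟩)
  -- exchangeability: all survival events have the same probability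
  have hAeq : ∀ i : Fin (N0+1), π (A i) = π (A (Fin.last N0)) := by
    intro i
    set τ : Equiv.Perm (Fin (N0+1)) := Equiv.swap i (Fin.last N0) with hτ
    set Tm : (Fin (N0+1) → E) → (Fin (N0+1) → E) := fun v j => v (τ j) with hTmdef
    have hTm : Tm = ⇑(MeasurableEquiv.piCongrLeft (fun _ : Fin (N0+1) => E) τ.symm) := by
      funext v j
      have h2 := MeasurableEquiv.piCongrLeft_apply_apply τ.symm (β := fun _ : Fin (N0+1) => E)
        v (τ j)
      simp only [Equiv.symm_apply_apply] at h2
      exact h2.symm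
    have hTP : MeasurePreserving Tm π π := by
      rw [hTm, hπdef]
      exact measurePreserving_piCongrLeft (fun _ : Fin (N0+1) => μ) τ.symm
    have hpre : π (Tm ⁻¹' A (Fin.last N0)) = π (A (Fin.last N0)) :=
      hTP.measure_preimage (hA _).nullMeasurableSet
    have hae : Tm ⁻¹' (A (Fin.last N0)) =ᵐ[π] A i := by
      rw [Filter.eventuallyEq_set]
      filter_upwards [compl_mem_ae_iff.2 hDnull] with v hv
      have hinj := hvD v hv
      have hequiv := pruneFrom_univ_equiv τ (conformalK α N0)
        (f := fun m i' => σ m (v i')) hinj (Fin.last N0)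
      simp only [Set.mem_preimage, hAdef, Set.mem_setOf_eq]
      show Fin.last N0 ∈ pruneFrom Finset.univ (fun m j => σ m (v (τ j))) (conformalK α N0) L ↔ _
      rw [hequiv, hτ, Equiv.swap_apply_right]
    rw [← hpre, measure_congr hae]
  -- the number of survivors of the augmented pruning is deterministic
  have hcard_aug : ∀ v : Fin (N0+1) → E,
      (pruneFrom Finset.univ (fun m j => σ m (v j)) (conformalK α N0) L).card
        = conformalN α N0 L + 1 := by
    intro v
    refine pruneFrom_card _ _ _ (N := fun l => conformalN α N0 l + 1) ?_ ?_ ?_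
    · show (Finset.univ : Finset (Fin (N0+1))).card = conformalN α N0 0 + 1
      rw [Finset.card_univ, Fintype.card_fin]
      rfl
    · intro m _
      show conformalK α N0 (m+1) ≤ conformalN α N0 m + 1
      have := hk_le m
      omega
    · intro m _
      show conformalN α N0 (m+1) + 1 = (conformalN α N0 m + 1) - conformalK α N0 (m+1)
      have h1 := hk_le m
      have h2 := hN_succ m
      omega
  have hsum : (∑ i : Fin (N0+1), π (A i)) = ((conformalN α N0 L + 1 : ℕ) : ℝ≥0∞) := by
    have h1 : ∀ i, π (A i) = ∫⁻ v, (A i).indicator (fun _ => (1:ℝ≥0∞)) v ∂π := fun i =>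
      (lintegral_indicator_one (hA i)).symm
    calc (∑ i : Fin (N0+1), π (A i))
        = ∑ i : Fin (N0+1), ∫⁻ v, (A i).indicator (fun _ => (1:ℝ≥0∞)) v ∂π :=
          Finset.sum_congr rfl fun i _ => h1 i
      _ = ∫⁻ v, (∑ i : Fin (N0+1), (A i).indicator (fun _ => (1:ℝ≥0∞)) v) ∂π :=
          (lintegral_finset_sum _ fun i _ => measurable_one.indicator (hA i)).symm
      _ = ((conformalN α N0 L + 1 : ℕ) : ℝ≥0∞) := ?_
    have h2 : ∀ v, (∑ i : Fin (N0+1), (A i).indicator (fun _ => (1:ℝ≥0∞)) v)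
        = ((conformalN α N0 L + 1 : ℕ) : ℝ≥0∞) := by
      intro v
      have h3 : ∀ i, (A i).indicator (fun _ => (1:ℝ≥0∞)) v
          = if i ∈ pruneFrom Finset.univ (fun m j => σ m (v j)) (conformalK α N0) L
            then 1 else 0 := by
        intro i
        by_cases h : i ∈ pruneFrom Finset.univ (fun m j => σ m (v j)) (conformalK α N0) L
        · simp [hAdef, Set.indicator, h]
        · simp [hAdef, Set.indicator, h]
      rw [Finset.sum_congr rfl fun i _ => h3 i, Finset.sum_boole, Finset.filter_univ_mem,
        hcard_aug v]
    rw [lintegral_congr h2, lintegral_const, measure_univ, mul_one]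

  have hNnz : ((N0 + 1 : ℕ) : ℝ≥0∞) ≠ 0 := by
    simp
  have hNnt : ((N0 + 1 : ℕ) : ℝ≥0∞) ≠ ⊤ := by
    simp
  have hlast : π (A (Fin.last N0))
      = ((conformalN α N0 L + 1 : ℕ) : ℝ≥0∞) / ((N0 + 1 : ℕ) : ℝ≥0∞) := by
    refine (ENNReal.eq_div_iff hNnz hNnt).2 ?_
    rw [← hsum, Finset.sum_congr rfl fun i _ => hAeq i, Finset.sum_const, Finset.card_univ,
      Fintype.card_fin, nsmul_eq_mul]
  -- identify the statement event with the survival event, off the null tie set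
  set B : Set (Fin (N0+1) → E) := {v | ∀ l ∈ Finset.Icc 1 L,
    (if conformalK α N0 l = 0 then (⊥ : EReal) else
      ((kthSmallestVal
          (pruneSeq (fun m (i : Fin N0) => σ m (v i.castSucc)) (conformalK α N0) (l - 1))
          (fun (i : Fin N0) => σ l (v i.castSucc)) (conformalK α N0 l) : ℝ) : EReal))
      ≤ ((σ l (v (Fin.last N0)) : ℝ) : EReal)} with hBdef
  have hcal_card : ∀ v : Fin (N0+1) → E, ∀ l,
      (pruneFrom ((Finset.univ : Finset (Fin (N0+1))).erase (Fin.last N0))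
        (fun m j => σ m (v j)) (conformalK α N0) l).card = conformalN α N0 l := by
    intro v l
    refine pruneFrom_card _ _ _ (N := conformalN α N0) ?_ (fun m _ => hk_le m)
      (fun m _ => hN_succ m)
    rw [Finset.card_erase_of_mem (Finset.mem_univ _), Finset.card_univ, Fintype.card_fin]
    rfl
  have hBiff : ∀ v : Fin (N0+1) → E, v ∉ D → (v ∈ B ↔ v ∈ A (Fin.last N0)) := by
    intro v hv
    have hinj := hvD v hv
    have h0' : ((Finset.univ : Finset (Fin (N0+1))).erase (Fin.last N0)).card
        = conformalN α N0 0 := by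
      rw [Finset.card_erase_of_mem (Finset.mem_univ _), Finset.card_univ, Fintype.card_fin]
      rfl
    have hsurv := survive_iff (Fin.last N0) (fun m i => σ m (v i)) (conformalK α N0) L
      hinj h0' (fun m _ => hk_le m) (fun m _ => hN_succ m)
    -- key per-step facts
    have hkey : ∀ m, 1 ≤ m → m ≤ L → conformalK α N0 m ≠ 0 →
        ∃ i0 ∈ pruneFrom ((Finset.univ : Finset (Fin (N0+1))).erase (Fin.last N0))
            (fun m' j => σ m' (v j)) (conformalK α N0) (m-1),
          σ m (v i0) = kthSmallestVal
            (pruneFrom ((Finset.univ : Finset (Fin (N0+1))).erase (Fin.last N0))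
              (fun m' j => σ m' (v j)) (conformalK α N0) (m-1))
            (fun i => σ m (v i)) (conformalK α N0 m) := by
      intro m h1 h2 hkm
      have hks : conformalK α N0 m ≤
          (pruneFrom ((Finset.univ : Finset (Fin (N0+1))).erase (Fin.last N0))
            (fun m' j => σ m' (v j)) (conformalK α N0) (m-1)).card := by
        rw [hcal_card v (m-1)]
        have := hk_le (m-1)
        have hm1 : m - 1 + 1 = m := by omega
        rwa [hm1] at this
      obtain ⟨⟨i0, hi0, hfi0⟩, -, -⟩ :=
        kthSmallestVal_spec (hinj m h1 h2) (Nat.one_le_iff_ne_zero.2 hkm) hks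
      exact ⟨i0, hi0, hfi0⟩
    constructor
    · intro hvB
      rw [hAdef, Set.mem_setOf_eq, hsurv.1]
      intro m h1 h2
      by_cases hkm : conformalK α N0 m = 0
      · exact Or.inl hkm
      · right
        have hcond := hvB m (Finset.mem_Icc.2 ⟨h1, h2⟩)
        rw [if_neg hkm] at hcond
        rw [EReal.coe_le_coe_iff] at hcond
        rw [← kthSmallestVal_erase_last (fun m' j => σ m' (v j)) (conformalK α N0) (m-1) m]
          at hcond
        obtain ⟨i0, hi0, hfi0⟩ := hkey m h1 h2 hkm
        have hi0ne : i0 ≠ Fin.last N0 := by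
          intro hc
          have := pruneFrom_subset _ _ _ _ hi0
          rw [hc] at this
          exact Finset.notMem_erase _ _ this
        have hne : kthSmallestVal
            (pruneFrom ((Finset.univ : Finset (Fin (N0+1))).erase (Fin.last N0))
              (fun m' j => σ m' (v j)) (conformalK α N0) (m-1))
            (fun i => σ m (v i)) (conformalK α N0 m) ≠ σ m (v (Fin.last N0)) := by
          rw [← hfi0]
          intro hc
          exact hi0ne (hinj m h1 h2 hc)
        exact lt_of_le_of_ne hcond hne
    · intro hvA
      rw [hAdef, Set.mem_setOf_eq, hsurv.1] at hvA
      intro m hm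
      obtain ⟨h1, h2⟩ := Finset.mem_Icc.1 hm
      by_cases hkm : conformalK α N0 m = 0
      · rw [if_pos hkm]
        exact bot_le
      · rcases hvA m h1 h2 with hkm' | hlt
        · exact absurd hkm' hkm
        · rw [if_neg hkm, EReal.coe_le_coe_iff,
            ← kthSmallestVal_erase_last (fun m' j => σ m' (v j)) (conformalK α N0) (m-1) m]
          exact le_of_lt hlt
  -- transfer the event to the product space and conclude
  have hYD : P (Y ⁻¹' D) = 0 := by
    rw [← Measure.map_apply hYmeas hD, hYlaw]
    exact hDnull
  have hae2 : (Y ⁻¹' B) =ᵐ[P] (Y ⁻¹' A (Fin.last N0)) := by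
    rw [Filter.eventuallyEq_set]
    filter_upwards [compl_mem_ae_iff.2 hYD] with ω hω
    exact hBiff (Y ω) hω
  have hPS : P (Y ⁻¹' B) = π (A (Fin.last N0)) := by
    rw [measure_congr hae2, ← Measure.map_apply hYmeas (hA _), hYlaw]
  show (1 - α) ^ L ≤ (P (Y ⁻¹' B)).toReal
  rw [hPS, hlast, ENNReal.toReal_div, ENNReal.toReal_natCast, ENNReal.toReal_natCast]
  have hfin := conformal_pow_le hα N0 L
  rw [le_div_iff₀ (by positivity)]
  push_cast
  push_cast at hfin
  linarith

end
end

section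
/- Let N be a positive integer and let X₁,…,X_N, X_{N+1} be independent, identically distributed real-valued random variables whose common distribution is atomless. Fix α ∈ (0,1) with α(N+1) ≥ 1, set k = ⌊α(N+1)⌋, and let t be the k-th smallest value among X₁,…,X_N. Then P( X_{N+1} ≥ t ) = 1 − k/(N+1), and in particular P( X_{N+1} ≥ t ) ≥ 1 − α. -/
open MeasureTheory ProbabilityTheory Finset

noncomputable section

open scoped ENNReal

lemma sorted_getD_le_iff (y : ℝ) :
    ∀ (l : List ℝ), l.Pairwise (· ≤ ·) → ∀ k : ℕ, 1 ≤ k → k ≤ l.length →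
      (l.getD (k - 1) 0 ≤ y ↔ k ≤ l.countP (fun a => decide (a ≤ y)))
  | [], _, k, hk1, hk2 => by simp at hk2; omega
  | a :: l, hl, k, hk1, hk2 => by
    obtain ⟨ha, hl'⟩ := List.pairwise_cons.mp hl
    rcases Nat.lt_or_ge k 2 with h | h
    · have hk : k = 1 := by omega
      subst hk
      simp only [List.getD_cons_zero, List.countP_cons]
      by_cases hay : a ≤ y
      · simp [hay]
      · simp only [hay, decide_eq_true_eq, if_false, add_zero]
        constructor
        · intro h; exact absurd h hay
        · intro hc
          obtain ⟨b, hb, hby⟩ := List.countP_pos_iff.mp (by omega : 0 < l.countP (fun a => decide (a ≤ y)))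
          exact absurd (le_trans (ha b hb) (by simpa using hby)) hay
    · obtain ⟨k', rfl⟩ : ∃ k', k = k' + 1 := ⟨k - 1, by omega⟩
      have hk1' : 1 ≤ k' := by omega
      have hk2' : k' ≤ l.length := by simpa using hk2
      have hget : (a :: l).getD (k' + 1 - 1) 0 = l.getD (k' - 1) 0 := by
        obtain ⟨m, rfl⟩ : ∃ m, k' = m + 1 := ⟨k' - 1, by omega⟩
        simp
      rw [hget, sorted_getD_le_iff y l hl' k' hk1' hk2', List.countP_cons]
      by_cases hay : a ≤ y
      · simp [hay]
      · have hz : l.countP (fun a => decide (a ≤ y)) = 0 := by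
          rw [List.countP_eq_zero]
          intro b hb
          simp only [decide_eq_true_eq]
          exact fun hby => hay (le_trans (ha b hb) hby)
        simp [hay, hz]; omega

lemma kthSmallestVal_le_iff {ι : Type*} (s : Finset ι) (f : ι → ℝ) (k : ℕ)
    (hk1 : 1 ≤ k) (hk2 : k ≤ s.card) (y : ℝ) :
    kthSmallestVal s f k ≤ y ↔ k ≤ (s.filter (fun i => f i ≤ y)).card := by
  classical
  set l := (s.val.map f).sort (· ≤ ·) with hl
  have hsorted : l.Pairwise (· ≤ ·) := (s.val.map f).pairwise_sort _
  have hlen : l.length = s.card := by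
    rw [hl, Multiset.length_sort, Multiset.card_map]
    rfl
  have hcount : l.countP (fun a => decide (a ≤ y)) = (s.filter (fun i => f i ≤ y)).card := by
    have h1 : (l : Multiset ℝ) = s.val.map f := (s.val.map f).sort_eq _
    have h2 : Multiset.countP (fun a => a ≤ y) (l : Multiset ℝ)
        = Multiset.countP (fun a => a ≤ y) (s.val.map f) := by rw [h1]
    rw [Multiset.coe_countP] at h2
    rw [h2, Multiset.countP_map]
    rfl
  rw [kthSmallestVal, ← hl, sorted_getD_le_iff y l hsorted k hk1 (by omega), hcount]

lemma law_perm {Ω : Type*} [MeasurableSpace Ω] (P : Measure Ω) [IsProbabilityMeasure P]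
    {n : ℕ} (X : Fin n → Ω → ℝ) (hXmeas : ∀ i, Measurable (X i))
    (hXindep : iIndepFun X P)
    (μ : Measure ℝ) (hμ : IsProbabilityMeasure μ)
    (hXlaw : ∀ i, P.map (X i) = μ) (σ : Equiv.Perm (Fin n)) :
    P.map (fun ω i => X (σ i) ω) = Measure.pi (fun _ => μ) := by
  symm
  have hF : Measurable (fun ω i => X (σ i) ω) :=
    measurable_pi_lambda _ fun i => hXmeas (σ i)
  refine Measure.pi_eq fun s hs => ?_
  rw [Measure.map_apply hF (MeasurableSet.univ_pi hs)]
  have hpre : (fun ω i => X (σ i) ω) ⁻¹' Set.univ.pi s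
      = ⋂ i ∈ Finset.univ, X i ⁻¹' s (σ.symm i) := by
    ext ω
    simp only [Set.mem_preimage, Set.mem_univ_pi, Set.iInter_coe_set, Finset.mem_univ,
      Set.iInter_true, Set.mem_iInter]
    constructor
    · intro h j
      have := h (σ.symm j)
      simpa using this
    · intro h i
      have := h (σ i)
      simpa using this
  rw [hpre, hXindep.measure_inter_preimage_eq_mul Finset.univ (fun i _ => hs (σ.symm i))]
  have hval : ∀ i, P (X i ⁻¹' s (σ.symm i)) = μ (s (σ.symm i)) := fun i => by
    rw [← hXlaw i, Measure.map_apply (hXmeas i) (hs _)]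
  calc ∏ i, P (X i ⁻¹' s (σ.symm i)) = ∏ i, μ (s (σ.symm i)) := by
        exact Finset.prod_congr rfl fun i _ => hval i
    _ = ∏ i, μ (s i) := Equiv.prod_comp σ.symm (fun j => μ (s j))

def rankCount {n : ℕ} (x : Fin n → ℝ) (j : Fin n) : ℕ :=
  (Finset.univ.filter fun i => x i ≤ x j).card

lemma rankCount_measurable {n : ℕ} (j : Fin n) :
    Measurable (fun x : Fin n → ℝ => rankCount x j) := by
  have : (fun x : Fin n → ℝ => rankCount x j)
      = fun x => ∑ i : Fin n, if x i ≤ x j then 1 else 0 := by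
    ext x; rw [rankCount, Finset.card_filter]
  rw [this]
  exact Finset.measurable_sum _ fun i _ =>
    Measurable.ite (measurableSet_le (measurable_pi_apply i) (measurable_pi_apply j))
      measurable_const measurable_const

lemma rankCount_lt {n : ℕ} {x : Fin n → ℝ} {a b : Fin n} (h : x a < x b) :
    rankCount x a < rankCount x b := by
  apply Finset.card_lt_card
  have hsub : (Finset.univ.filter fun i => x i ≤ x a) ⊆ Finset.univ.filter fun i => x i ≤ x b :=
    Finset.monotone_filter_right _ fun i _ hi => le_trans hi h.le
  exact (Finset.ssubset_iff_of_subset hsub).mpr ⟨b, by simp, by simp [not_le.mpr h]⟩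
  
lemma rankCount_injective {n : ℕ} {x : Fin n → ℝ} (hx : Function.Injective x) :
    Function.Injective (rankCount x) := by
  intro a b hab
  by_contra hne
  rcases lt_or_gt_of_ne (fun h => hne (hx h)) with h | h
  · exact absurd hab (Nat.ne_of_lt (rankCount_lt h))
  · exact absurd hab.symm (Nat.ne_of_lt (rankCount_lt h))

lemma rankCount_pos {n : ℕ} (x : Fin n → ℝ) (j : Fin n) : 1 ≤ rankCount x j :=
  Finset.card_pos.mpr ⟨j, by simp [rankCount]⟩

lemma rankCount_le {n : ℕ} (x : Fin n → ℝ) (j : Fin n) : rankCount x j ≤ n := by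
  simpa [rankCount] using Finset.card_filter_le (Finset.univ : Finset (Fin n)) _

lemma rankCount_surj {n : ℕ} {x : Fin n → ℝ} (hx : Function.Injective x)
    {r : ℕ} (hr1 : 1 ≤ r) (hr2 : r ≤ n) : ∃ j, rankCount x j = r := by
  have hc : Function.Injective (fun j : Fin n => (⟨rankCount x j - 1, by
      have := rankCount_le x j; have := rankCount_pos x j; omega⟩ : Fin n)) := by
    intro a b hab
    simp only [Fin.mk.injEq] at hab
    have h1 := rankCount_pos x a
    have h2 := rankCount_pos x b
    exact rankCount_injective hx (by omega)
  obtain ⟨j, hj⟩ := (Finite.injective_iff_surjective.mp hc) ⟨r - 1, by omega⟩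
  have hj' : rankCount x j - 1 = r - 1 := by simpa [Fin.ext_iff] using hj
  have := rankCount_pos x j
  exact ⟨j, by omega⟩

lemma rankCount_comp {n : ℕ} (x : Fin n → ℝ) (σ : Equiv.Perm (Fin n)) (j : Fin n) :
    rankCount (fun i => x (σ i)) j = rankCount x (σ j) := by
  apply Finset.card_bij' (fun i _ => σ i) (fun i _ => σ.symm i)
  · intro a ha; simp only [Finset.mem_filter, Finset.mem_univ, true_and] at *; exact ha
  · intro a ha; simp only [Finset.mem_filter, Finset.mem_univ, true_and] at *; simpa using ha
  · intro a _; simp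
  · intro a _; simp

lemma rankCount_last {N : ℕ} (x : Fin (N + 1) → ℝ) :
    rankCount x (Fin.last N)
      = (Finset.univ.filter fun i : Fin N => x i.castSucc ≤ x (Fin.last N)).card + 1 := by
  have huniv : (Finset.univ : Finset (Fin (N + 1)))
      = insert (Fin.last N) (Finset.Iio (Fin.last N)) := by
    ext i
    simp only [Finset.mem_insert, Finset.mem_Iio, Finset.mem_univ, true_iff]
    rcases lt_or_eq_of_le (Fin.le_last i) with h | h
    · exact Or.inr h
    · exact Or.inl h
  rw [rankCount, huniv, Finset.filter_insert, if_pos le_rfl,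
    Finset.card_insert_of_notMem, Fin.Iio_last_eq_map, Finset.filter_map, Finset.card_map]
  · rfl
  · intro hmem
    exact absurd (Finset.mem_Iio.mp (Finset.mem_of_mem_filter _ hmem)) (lt_irrefl _)

/-- **Split conformal coverage guarantee.**
If `X₁, …, X_N, X_{N+1}` are i.i.d. real (conformity) scores with atomless common law,
`α ∈ (0,1)` with `α(N+1) ≥ 1`, `k = ⌊α(N+1)⌋`, and `t` is the `k`-th smallest calibration
score among `X₁, …, X_N`, then `P(X_{N+1} ≥ t) = 1 - k/(N+1) ≥ 1 - α`. -/
theorem split_conformal_coverage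
    {Ω : Type*} [MeasurableSpace Ω] (P : Measure Ω) [IsProbabilityMeasure P]
    (N : ℕ) (hN : 0 < N)
    (X : Fin (N + 1) → Ω → ℝ)
    (hXmeas : ∀ i, Measurable (X i))
    (hXindep : iIndepFun X P)
    (μ : Measure ℝ) (hXlaw : ∀ i, P.map (X i) = μ) (hatomless : NoAtoms μ)
    (α : ℝ) (hα : α ∈ Set.Ioo (0 : ℝ) 1) (hαN : 1 ≤ α * (N + 1))
    (k : ℕ) (hk : k = ⌊α * (N + 1)⌋₊) :
    (P {ω | kthSmallestVal Finset.univ (fun i : Fin N => X i.castSucc ω) k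
        ≤ X (Fin.last N) ω}).toReal = 1 - (k : ℝ) / (N + 1)
    ∧ 1 - α ≤
      (P {ω | kthSmallestVal Finset.univ (fun i : Fin N => X i.castSucc ω) k
        ≤ X (Fin.last N) ω}).toReal := by
  obtain ⟨hα0, hα1⟩ := hα
  -- bounds on k
  have hNpos : (0 : ℝ) < (N : ℝ) + 1 := by positivity
  have hk1 : 1 ≤ k := by
    rw [hk]
    exact Nat.le_floor (by exact_mod_cast hαN)
  have hkN : k ≤ N := by
    have : (⌊α * (N + 1)⌋₊ : ℕ) < N + 1 := by
      rw [Nat.floor_lt (by positivity)]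
      push_cast
      nlinarith
    omega
  have hkle : (k : ℝ) ≤ α * (N + 1) := by
    rw [hk]; exact Nat.floor_le (by positivity)
  -- probability law setup
  have hμprob : IsProbabilityMeasure μ := by
    rw [← hXlaw 0]
    exact Measure.isProbabilityMeasure_map (hXmeas 0).aemeasurable
  set π : Measure (Fin (N + 1) → ℝ) := Measure.pi (fun _ => μ) with hπ
  have hπprob : IsProbabilityMeasure π := by rw [hπ]; infer_instance
  set F : Ω → (Fin (N + 1) → ℝ) := fun ω i => X i ω with hF
  have hFmeas : Measurable F := measurable_pi_lambda _ hXmeas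
  have hlaw0 : P.map F = π := by
    have := law_perm P X hXmeas hXindep μ hμprob hXlaw (Equiv.refl _)
    simpa [hF, hπ] using this
  have hinv : ∀ σ : Equiv.Perm (Fin (N + 1)), π.map (fun x i => x (σ i)) = π := by
    intro σ
    have hg : Measurable (fun (x : Fin (N + 1) → ℝ) i => x (σ i)) :=
      measurable_pi_lambda _ fun i => measurable_pi_apply _
    rw [← hlaw0, Measure.map_map hg hFmeas]
    have : (fun x i => x (σ i)) ∘ F = fun ω i => X (σ i) ω := rfl
    rw [this, law_perm P X hXmeas hXindep μ hμprob hXlaw σ, hlaw0]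
  -- measurable pieces
  have hAmeas : ∀ (j : Fin (N + 1)) (r : ℕ), MeasurableSet {x : Fin (N + 1) → ℝ | rankCount x j = r} :=
    fun j r => (rankCount_measurable j) (measurableSet_singleton r)
  set D : Set (Fin (N + 1) → ℝ) := {x | Function.Injective x} with hD
  have hDmeas : MeasurableSet D := by
    have : D = ⋂ (i : Fin (N + 1)), ⋂ (j : Fin (N + 1)), ⋂ (_ : i ≠ j), {x | x i ≠ x j} := by
      ext x
      simp only [hD, Set.mem_setOf_eq, Set.mem_iInter, Function.Injective]
      constructor
      · intro h i j hij; exact fun hxx => hij (h hxx)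
      · intro h a b hab; by_contra hne; exact h a b hne hab
    rw [this]
    exact MeasurableSet.iInter fun i => MeasurableSet.iInter fun j => MeasurableSet.iInter fun _ =>
      (measurableSet_eq_fun (measurable_pi_apply i) (measurable_pi_apply j)).compl
  -- D has full measure
  have hDc : π Dᶜ = 0 := by
    have hsub : Dᶜ ⊆ ⋃ (i : Fin (N + 1)), ⋃ (j : Fin (N + 1)), ⋃ (_ : i ≠ j), {x | x i = x j} := by
      intro x hx
      simp only [hD, Set.mem_compl_iff, Set.mem_setOf_eq, Function.Injective, not_forall] at hx
      obtain ⟨a, b, hab, hne⟩ := hx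
      simp only [Set.mem_iUnion]
      exact ⟨a, b, hne, hab⟩
    refine measure_mono_null hsub ?_
    refine measure_iUnion_null fun i => measure_iUnion_null fun j => measure_iUnion_null fun hij => ?_
    -- π {x | x i = x j} = 0
    have hij' : IndepFun (X i) (X j) P := hXindep.indepFun hij
    have hmapij : P.map (fun ω => (X i ω, X j ω)) = μ.prod μ := by
      rw [(indepFun_iff_map_prod_eq_prod_map_map (hXmeas i).aemeasurable (hXmeas j).aemeasurable).mp hij',
        hXlaw i, hXlaw j]
    have hdiag : MeasurableSet {p : ℝ × ℝ | p.1 = p.2} :=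
      measurableSet_eq_fun measurable_fst measurable_snd
    have hdiag0 : (μ.prod μ) {p : ℝ × ℝ | p.1 = p.2} = 0 := by
      rw [Measure.prod_apply hdiag]
      have : ∀ a : ℝ, μ (Prod.mk a ⁻¹' {p : ℝ × ℝ | p.1 = p.2}) = 0 := by
        intro a
        have : Prod.mk a ⁻¹' {p : ℝ × ℝ | p.1 = p.2} = {a} := by
          ext b; simp [eq_comm]
        rw [this]; exact hatomless.measure_singleton a
      simp only [this, lintegral_zero]
    have hset : {x : Fin (N + 1) → ℝ | x i = x j}
        = (fun x : Fin (N + 1) → ℝ => (x i, x j)) ⁻¹' {p : ℝ × ℝ | p.1 = p.2} := rfl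
    rw [← hlaw0, hset,
      Measure.map_apply hFmeas (((measurable_pi_apply i).prodMk (measurable_pi_apply j)) hdiag)]
    have : F ⁻¹' ((fun x : Fin (N + 1) → ℝ => (x i, x j)) ⁻¹' {p : ℝ × ℝ | p.1 = p.2})
        = (fun ω => (X i ω, X j ω)) ⁻¹' {p : ℝ × ℝ | p.1 = p.2} := rfl
    rw [this, ← Measure.map_apply ((hXmeas i).prodMk (hXmeas j)) hdiag, hmapij, hdiag0]
  have hD1 : π D = 1 := (prob_compl_eq_zero_iff hDmeas).mp hDc
  -- each rank value has probability 1/(N+1) on D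
  have hrank : ∀ r : ℕ, 1 ≤ r → r ≤ N + 1 →
      π ({x | rankCount x (Fin.last N) = r} ∩ D)
        = 1 / ((N + 1 : ℕ) : ℝ≥0∞) := by
    intro r hr1 hr2
    have hsym : ∀ j : Fin (N + 1),
        π ({x | rankCount x j = r} ∩ D) = π ({x | rankCount x (Fin.last N) = r} ∩ D) := by
      intro j
      set σ := Equiv.swap j (Fin.last N) with hσ
      have hg : Measurable (fun (x : Fin (N + 1) → ℝ) i => x (σ i)) :=
        measurable_pi_lambda _ fun i => measurable_pi_apply _
      have hpre : (fun (x : Fin (N + 1) → ℝ) i => x (σ i)) ⁻¹' ({x | rankCount x j = r} ∩ D)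
          = {x | rankCount x (Fin.last N) = r} ∩ D := by
        ext x
        simp only [Set.mem_preimage, Set.mem_inter_iff, Set.mem_setOf_eq, hD]
        have h1 : rankCount (fun i => x (σ i)) j = rankCount x (Fin.last N) := by
          rw [rankCount_comp]
          congr 1
          rw [hσ]
          exact Equiv.swap_apply_left j (Fin.last N)
        have h2 : Function.Injective (fun i => x (σ i)) ↔ Function.Injective x := by
          constructor
          · intro h
            have hx : x = (fun i => x (σ i)) ∘ σ.symm := by ext i; simp
            rw [hx]
            exact h.comp σ.symm.injective
          · intro h
            exact h.comp σ.injective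
        rw [h1, h2]
      calc π ({x | rankCount x j = r} ∩ D)
          = (π.map (fun x i => x (σ i))) ({x | rankCount x j = r} ∩ D) := by rw [hinv σ]
        _ = π ((fun (x : Fin (N + 1) → ℝ) i => x (σ i)) ⁻¹' ({x | rankCount x j = r} ∩ D)) :=
            Measure.map_apply hg ((hAmeas j r).inter hDmeas)
        _ = π ({x | rankCount x (Fin.last N) = r} ∩ D) := by rw [hpre]
    have hdisj : Pairwise (Function.onFun Disjoint
        fun j : Fin (N + 1) => {x | rankCount x j = r} ∩ D) := by
      intro a b hab
      rw [Function.onFun, Set.disjoint_left]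
      rintro x ⟨hxa, hxD⟩ ⟨hxb, -⟩
      exact hab (rankCount_injective hxD (hxa.trans hxb.symm))
    have hcover : (⋃ j, {x | rankCount x j = r} ∩ D) = D := by
      apply Set.Subset.antisymm
      · exact Set.iUnion_subset fun j => Set.inter_subset_right
      · intro x hxD
        obtain ⟨j, hj⟩ := rankCount_surj hxD hr1 hr2
        exact Set.mem_iUnion.mpr ⟨j, ⟨hj, hxD⟩⟩
    have hsum : ∑ j : Fin (N + 1), π ({x | rankCount x j = r} ∩ D) = 1 := by
      have h := measure_iUnion (μ := π) hdisj (fun j => (hAmeas j r).inter hDmeas)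
      rw [hcover, hD1, tsum_fintype] at h
      exact h.symm
    have hsum' : ((N + 1 : ℕ) : ℝ≥0∞) * π ({x | rankCount x (Fin.last N) = r} ∩ D) = 1 := by
      calc ((N + 1 : ℕ) : ℝ≥0∞) * π ({x | rankCount x (Fin.last N) = r} ∩ D)
          = ∑ _j : Fin (N + 1), π ({x | rankCount x (Fin.last N) = r} ∩ D) := by
            rw [Finset.sum_const, Finset.card_univ, Fintype.card_fin, nsmul_eq_mul]
        _ = ∑ j : Fin (N + 1), π ({x | rankCount x j = r} ∩ D) :=
            Finset.sum_congr rfl fun j _ => (hsym j).symm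
        _ = 1 := hsum
    rw [ENNReal.eq_div_iff (Nat.cast_ne_zero.mpr (Nat.succ_ne_zero N))
      (ENNReal.natCast_ne_top _)]
    exact hsum'
  -- the event in the pi space
  set E : Set (Fin (N + 1) → ℝ) := {x | k + 1 ≤ rankCount x (Fin.last N)} with hE
  have hEmeas : MeasurableSet E := by
    have : E = (fun x => rankCount x (Fin.last N)) ⁻¹' Set.Ici (k + 1) := rfl
    rw [this]
    exact rankCount_measurable (Fin.last N) trivial
  have hEdecomp : E ∩ D
      = ⋃ r ∈ Finset.Icc (k + 1) (N + 1), ({x | rankCount x (Fin.last N) = r} ∩ D) := by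
    ext x
    simp only [hE, Set.mem_inter_iff, Set.mem_setOf_eq, Set.mem_iUnion, Finset.mem_Icc]
    constructor
    · rintro ⟨hx, hxD⟩
      exact ⟨rankCount x (Fin.last N), ⟨hx, rankCount_le x (Fin.last N)⟩, rfl, hxD⟩
    · rintro ⟨r, ⟨hr1, -⟩, hr, hxD⟩
      exact ⟨by omega, hxD⟩
  have hEDval : π (E ∩ D) = ((N + 1 - k : ℕ) : ℝ≥0∞) * (1 / ((N + 1 : ℕ) : ℝ≥0∞)) := by
    rw [hEdecomp, measure_biUnion_finset ?_ (fun r _ => (hAmeas (Fin.last N) r).inter hDmeas)]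
    · rw [Finset.sum_congr rfl fun r hr => hrank r (by have := (Finset.mem_Icc.mp hr).1; omega)
        (Finset.mem_Icc.mp hr).2]
      rw [Finset.sum_const, Nat.card_Icc, nsmul_eq_mul]
      congr 2
      omega
    · intro a ha b hb hab
      rw [Function.onFun, Set.disjoint_left]
      rintro x ⟨hxa, -⟩ ⟨hxb, -⟩
      exact hab (hxa.symm.trans hxb)
  have hEval : π E = ((N + 1 - k : ℕ) : ℝ≥0∞) * (1 / ((N + 1 : ℕ) : ℝ≥0∞)) := by
    rw [← hEDval]
    apply le_antisymm ?_ (measure_mono Set.inter_subset_left)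
    calc π E = π ((E ∩ D) ∪ (E ∩ Dᶜ)) := by rw [Set.inter_union_compl]
      _ ≤ π (E ∩ D) + π (E ∩ Dᶜ) := measure_union_le _ _
      _ ≤ π (E ∩ D) + π Dᶜ := by gcongr; exact Set.inter_subset_right
      _ = π (E ∩ D) := by rw [hDc, add_zero]
  -- identify the Ω event
  have hevent : {ω | kthSmallestVal Finset.univ (fun i : Fin N => X i.castSucc ω) k
      ≤ X (Fin.last N) ω} = F ⁻¹' E := by
    ext ω
    simp only [Set.mem_setOf_eq, Set.mem_preimage, hE]
    rw [kthSmallestVal_le_iff _ _ k hk1 (by simp [hkN]), rankCount_last (F ω)]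
    have hcongr : (Finset.univ.filter fun i : Fin N => F ω i.castSucc ≤ F ω (Fin.last N))
        = Finset.univ.filter fun i : Fin N => X i.castSucc ω ≤ X (Fin.last N) ω := rfl
    rw [hcongr]
    omega
  have hPval : P {ω | kthSmallestVal Finset.univ (fun i : Fin N => X i.castSucc ω) k
      ≤ X (Fin.last N) ω} = π E := by
    rw [hevent, ← Measure.map_apply hFmeas hEmeas, hlaw0]
  -- numerics
  have hkN1 : k ≤ N + 1 := by omega
  have htoReal : (P {ω | kthSmallestVal Finset.univ (fun i : Fin N => X i.castSucc ω) k
      ≤ X (Fin.last N) ω}).toReal = 1 - (k : ℝ) / (N + 1) := by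
    rw [hPval, hEval, ENNReal.toReal_mul, ENNReal.toReal_div, ENNReal.toReal_one,
      ENNReal.toReal_natCast, ENNReal.toReal_natCast]
    have h1 : ((N + 1 - k : ℕ) : ℝ) = (N : ℝ) + 1 - (k : ℝ) := by
      push_cast [hkN1]
      ring
    have h2 : ((N + 1 : ℕ) : ℝ) = (N : ℝ) + 1 := by push_cast; ring
    rw [h1, h2]
    field_simp
  refine ⟨htoReal, ?_⟩
  rw [htoReal]
  have : (k : ℝ) / ((N : ℝ) + 1) ≤ α := by
    rw [div_le_iff₀ hNpos]
    linarith [hkle]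
  linarith

end
end

section
/- Let n be a positive integer, p ∈ (0,1), δ ∈ (0,1), and let X be a random variable with the binomial distribution with parameters n and p. For an integer k with 1 ≤ k ≤ n, define q(k) ∈ (0,1) as the unique solution q of [n!/((k−1)!(n−k)!)] ∫₀^q t^{k−1}(1−t)^{n−k} dt = δ (the δ-quantile of the Beta(k, n+1−k) distribution), and set q(0) = 0. Then P( q(X) ≤ p ) ≥ 1 − δ. -/
open MeasureTheory ProbabilityTheory


lemma term_deriv (n j : ℕ) (x : ℝ) :
    HasDerivAt (fun y : ℝ => (n.choose j : ℝ) * (y ^ j * (1 - y) ^ (n - j)))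
      ((n.choose j : ℝ) * ((j * x ^ (j-1)) * (1 - x) ^ (n - j)
        + x ^ j * ((n - j : ℕ) * (1 - x) ^ (n - j - 1) * (-1)))) x := by
  have h1 : HasDerivAt (fun y : ℝ => (1 - y)) (-1) x := by
    simpa using (hasDerivAt_id x).const_sub 1
  have h2 := (hasDerivAt_pow j x).mul (h1.pow (n - j))
  have h3 := h2.const_mul (n.choose j : ℝ)
  exact h3

-- a j
noncomputable def aa (n : ℕ) (x : ℝ) (j : ℕ) : ℝ :=
  if j ≤ n then ((n.factorial : ℝ) / ((j-1).factorial * (n-j).factorial)) * x ^ (j-1) * (1-x) ^ (n-j)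
  else 0

lemma cast_choose_mul (n j : ℕ) (h1 : 1 ≤ j) (h2 : j ≤ n) :
    (n.choose j : ℝ) * j = (n.factorial : ℝ) / ((j-1).factorial * (n-j).factorial) := by
  have key : n.choose j * j.factorial * (n-j).factorial = n.factorial :=
    Nat.choose_mul_factorial_mul_factorial h2
  have hj : j.factorial = j * (j-1).factorial := by
    cases j with
    | zero => omega
    | succ m => simp [Nat.factorial_succ]
  have h0 : ((j-1).factorial : ℝ) ≠ 0 := Nat.cast_ne_zero.2 (Nat.factorial_ne_zero _)
  have h0' : ((n-j).factorial : ℝ) ≠ 0 := Nat.cast_ne_zero.2 (Nat.factorial_ne_zero _)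
  field_simp
  have := congrArg (fun m : ℕ => (m : ℝ)) key
  push_cast [hj] at this ⊢
  nlinarith [this]

lemma cast_choose_mul' (n j : ℕ) (h2 : j < n) :
    (n.choose j : ℝ) * (n - j : ℕ) = (n.factorial : ℝ) / (j.factorial * (n-j-1).factorial) := by
  have key : n.choose j * j.factorial * (n-j).factorial = n.factorial :=
    Nat.choose_mul_factorial_mul_factorial h2.le
  have hj : (n-j).factorial = (n-j) * (n-j-1).factorial := by
    have : 1 ≤ n - j := by omega
    cases hnj : n - j with
    | zero => omega
    | succ m => simp [Nat.factorial_succ]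
  have h0 : ((j).factorial : ℝ) ≠ 0 := Nat.cast_ne_zero.2 (Nat.factorial_ne_zero _)
  have h0' : ((n-j-1).factorial : ℝ) ≠ 0 := Nat.cast_ne_zero.2 (Nat.factorial_ne_zero _)
  field_simp
  have := congrArg (fun m : ℕ => (m : ℝ)) key
  push_cast [hj] at this ⊢
  nlinarith [this]

lemma term_eq_sub (n j : ℕ) (x : ℝ) (h1 : 1 ≤ j) (h2 : j ≤ n) :
    (n.choose j : ℝ) * ((j * x ^ (j-1)) * (1 - x) ^ (n - j)
        + x ^ j * ((n - j : ℕ) * (1 - x) ^ (n - j - 1) * (-1)))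
    = aa n x j - aa n x (j+1) := by
  rcases eq_or_lt_of_le h2 with heq | hlt
  · subst heq
    simp [aa, Nat.sub_self]
    left
    have hj : (j.factorial : ℝ) = j * (j-1).factorial := by
      cases j with
      | zero => omega
      | succ m => push_cast [Nat.factorial_succ]; ring
    rw [hj]
    have h0 : ((j-1).factorial : ℝ) ≠ 0 := Nat.cast_ne_zero.2 (Nat.factorial_ne_zero _)
    field_simp
  · have e1 := cast_choose_mul n j h1 h2
    have e2 := cast_choose_mul' n j hlt
    have hj1 : j + 1 ≤ n := hlt
    simp only [aa, h2, hj1, if_pos]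
    have : j + 1 - 1 = j := by omega
    rw [this]
    have : n - (j+1) = n - j - 1 := by omega
    rw [this]
    linear_combination (x^(j-1)*(1-x)^(n-j)) * e1 - (x^j*(1-x)^(n-j-1)) * e2

lemma sum_deriv (n k : ℕ) (hk1 : 1 ≤ k) (hkn : k ≤ n) (x : ℝ) :
    HasDerivAt (fun y : ℝ => ∑ j ∈ Finset.Ico k (n+1), (n.choose j : ℝ) * (y ^ j * (1 - y) ^ (n - j)))
      (((n.factorial : ℝ) / ((k-1).factorial * (n-k).factorial)) * (x ^ (k-1) * (1-x) ^ (n-k))) x := by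
  have h := HasDerivAt.fun_sum (u := Finset.Ico k (n+1)) (fun j _ => term_deriv n j x)
  have hsum : ∑ j ∈ Finset.Ico k (n+1),
      (n.choose j : ℝ) * ((j * x ^ (j-1)) * (1 - x) ^ (n - j)
        + x ^ j * ((n - j : ℕ) * (1 - x) ^ (n - j - 1) * (-1)))
      = ((n.factorial : ℝ) / ((k-1).factorial * (n-k).factorial)) * (x ^ (k-1) * (1-x) ^ (n-k)) := by
    have step : ∀ j ∈ Finset.Ico k (n+1),
        (n.choose j : ℝ) * ((j * x ^ (j-1)) * (1 - x) ^ (n - j)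
          + x ^ j * ((n - j : ℕ) * (1 - x) ^ (n - j - 1) * (-1)))
        = aa n x j - aa n x (j+1) := by
      intro j hj
      rw [Finset.mem_Ico] at hj
      exact term_eq_sub n j x (le_trans hk1 hj.1) (by omega)
    rw [Finset.sum_congr rfl step]
    rw [Finset.sum_Ico_eq_sum_range]
    have htel : ∑ i ∈ Finset.range (n+1-k), (aa n x (k+i) - aa n x (k+i+1))
        = aa n x k - aa n x (k + (n+1-k)) := by
      have := Finset.sum_range_sub' (fun i => aa n x (k+i)) (n+1-k)
      simpa [add_assoc] using this
    rw [htel]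
    have h2 : k + (n+1-k) = n+1 := by omega
    rw [h2]
    have : aa n x (n+1) = 0 := by simp [aa]
    rw [this, sub_zero, aa, if_pos hkn]
    ring
  rw [← hsum]
  exact h

lemma sum_binom_eq_integral (n k : ℕ) (hk1 : 1 ≤ k) (hkn : k ≤ n) (x : ℝ) :
    ∑ j ∈ Finset.Ico k (n+1), (n.choose j : ℝ) * (x ^ j * (1 - x) ^ (n - j))
    = ((n.factorial : ℝ) / ((k-1).factorial * (n-k).factorial)) *
        ∫ t in (0:ℝ)..x, t ^ (k-1) * (1 - t) ^ (n - k) := by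
  set c : ℝ := (n.factorial : ℝ) / ((k-1).factorial * (n-k).factorial) with hc
  have hcont : Continuous (fun t : ℝ => c * (t ^ (k-1) * (1 - t) ^ (n-k))) := by
    continuity
  have hint : IntervalIntegrable (fun t : ℝ => c * (t ^ (k-1) * (1 - t) ^ (n-k)))
      MeasureTheory.volume 0 x := hcont.intervalIntegrable 0 x
  have key := intervalIntegral.integral_eq_sub_of_hasDerivAt
    (f := fun y : ℝ => ∑ j ∈ Finset.Ico k (n+1), (n.choose j : ℝ) * (y ^ j * (1 - y) ^ (n - j)))
    (fun t _ => sum_deriv n k hk1 hkn t) hint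
  have hz : ∑ j ∈ Finset.Ico k (n+1), (n.choose j : ℝ) * ((0:ℝ) ^ j * (1 - 0) ^ (n - j)) = 0 := by
    apply Finset.sum_eq_zero
    intro j hj
    rw [Finset.mem_Ico] at hj
    have : (0:ℝ) ^ j = 0 := zero_pow (by omega)
    simp [this]
  rw [hz, sub_zero] at key
  rw [← key, intervalIntegral.integral_const_mul]

/-- **Clopper–Pearson one-sided lower confidence bound for a binomial proportion.**
If `X ~ Bin(n, p)` with `p ∈ (0,1)`, `δ ∈ (0,1)`, and `q k` is the `δ`-quantile of the
`Beta(k, n+1-k)` distribution for `1 ≤ k ≤ n` (with `q 0 = 0`), then the random lower bound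
`q X` lies below `p` with probability at least `1 - δ`. -/
theorem clopper_pearson_lower_bound
    {Ω : Type*} [MeasurableSpace Ω] (P : Measure Ω) [IsProbabilityMeasure P]
    (n : ℕ) (hn : 0 < n)
    (p : ℝ) (hp : p ∈ Set.Ioo (0 : ℝ) 1)
    (δ : ℝ) (hδ : δ ∈ Set.Ioo (0 : ℝ) 1)
    -- `X` has the binomial distribution with parameters `n` and `p`
    (X : Ω → ℕ) (hXmeas : Measurable X)
    (hX : ∀ j : ℕ, (P {ω | X ω = j}).toReal = (n.choose j : ℝ) * p ^ j * (1 - p) ^ (n - j))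
    -- `q k` is the `δ`-quantile of the `Beta(k, n+1-k)` distribution, and `q 0 = 0`
    (q : ℕ → ℝ) (hq0 : q 0 = 0)
    (hq : ∀ k : ℕ, 1 ≤ k → k ≤ n → q k ∈ Set.Ioo (0 : ℝ) 1 ∧
      ((Nat.factorial n : ℝ) / (Nat.factorial (k - 1) * Nat.factorial (n - k))) *
        ∫ t in (0 : ℝ)..(q k), t ^ (k - 1) * (1 - t) ^ (n - k) = δ) :
    1 - δ ≤ (P {ω | q (X ω) ≤ p}).toReal := by
  classical
  -- finite-union probability computations
  have hdisj : ∀ (s : Finset ℕ), P {ω | X ω ∈ s} = ∑ j ∈ s, P {ω | X ω = j} := by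
    intro s
    have : {ω | X ω ∈ s} = ⋃ j ∈ s, X ⁻¹' {j} := by
      ext ω; simp
    rw [this, measure_biUnion_finset]
    · rfl
    · intro i _ j _ hij
      simp only [Function.onFun, Set.disjoint_left]
      rintro ω h1 h2
      simp only [Set.mem_preimage, Set.mem_singleton_iff] at h1 h2
      exact hij (h1.symm.trans h2)
    · intro j _
      exact hXmeas (measurableSet_singleton j)
  have hfin : ∀ s : Set Ω, P s ≠ ⊤ := fun s => (measure_lt_top P s).ne
  have htoReal : ∀ (s : Finset ℕ), (P {ω | X ω ∈ s}).toReal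
      = ∑ j ∈ s, (n.choose j : ℝ) * p ^ j * (1 - p) ^ (n - j) := by
    intro s
    rw [hdisj s, ENNReal.toReal_sum (fun j _ => hfin _)]
    exact Finset.sum_congr rfl (fun j _ => hX j)
  -- total probability X ≤ n is 1
  have hsum1 : ∑ j ∈ Finset.range (n+1), (n.choose j : ℝ) * p ^ j * (1 - p) ^ (n - j) = 1 := by
    calc ∑ j ∈ Finset.range (n+1), (n.choose j:ℝ)*p^j*(1-p)^(n-j)
        = ∑ j ∈ Finset.range (n+1), p^j*(1-p)^(n-j)*(n.choose j:ℝ) :=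
          Finset.sum_congr rfl (fun j _ => by ring)
      _ = (p+(1-p))^n := (add_pow p (1-p) n).symm
      _ = 1 := by norm_num
  have hXle : P {ω | X ω ∈ Finset.range (n+1)} = 1 := by
    have h1 : (P {ω | X ω ∈ Finset.range (n+1)}).toReal = 1 := by
      rw [htoReal]; exact hsum1
    rwa [ENNReal.toReal_eq_one_iff] at h1
  -- the "bad" finite set
  set S : Finset ℕ := (Finset.range (n+1)).filter (fun k => p < q k) with hS
  set E : Set Ω := {ω | q (X ω) ≤ p} with hE
  have hEmeas : MeasurableSet E := by
    have : E = X ⁻¹' {k | q k ≤ p} := rfl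
    rw [this]; exact hXmeas trivial
  -- complement bound
  have hcompl_sub : Eᶜ ⊆ {ω | X ω ∈ S} ∪ {ω | X ω ∈ Finset.range (n+1)}ᶜ := by
    intro ω hω
    simp only [hE, Set.mem_compl_iff, Set.mem_setOf_eq, not_le] at hω
    by_cases hle : X ω ∈ Finset.range (n+1)
    · left
      simp only [Set.mem_setOf_eq, hS, Finset.mem_filter]
      exact ⟨hle, hω⟩
    · right; exact hle
  -- bound on P(X ∈ S)
  have hSbound : (P {ω | X ω ∈ S}).toReal ≤ δ := by
    rcases Finset.eq_empty_or_nonempty S with hemp | hne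
    · rw [hemp]
      simp only [Finset.notMem_empty]
      norm_num
      exact le_of_lt hδ.1
    · set k0 := S.min' hne with hk0
      have hk0S : k0 ∈ S := S.min'_mem hne
      have hk0n : k0 ≤ n := by
        have := (Finset.mem_filter.1 hk0S).1
        rw [Finset.mem_range] at this; omega
      have hk0q : p < q k0 := (Finset.mem_filter.1 hk0S).2
      have hk01 : 1 ≤ k0 := by
        by_contra h
        push_neg at h
        interval_cases k0
        rw [hq0] at hk0q
        linarith [hp.1]
      obtain ⟨hqk0mem, hqk0int⟩ := hq k0 hk01 hk0n
      have hsub : S ⊆ Finset.Ico k0 (n+1) := by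
        intro k hk
        rw [Finset.mem_Ico]
        refine ⟨S.min'_le k hk, ?_⟩
        have := (Finset.mem_filter.1 hk).1
        rwa [Finset.mem_range] at this
      have hnonneg : ∀ j ∈ Finset.Ico k0 (n+1), 0 ≤ (n.choose j : ℝ) * p ^ j * (1 - p) ^ (n - j) := by
        intro j _
        have h1 : (0:ℝ) ≤ p := hp.1.le
        have h2 : (0:ℝ) ≤ 1 - p := by linarith [hp.2]
        exact mul_nonneg (mul_nonneg (Nat.cast_nonneg _) (pow_nonneg h1 _)) (pow_nonneg h2 _)
      calc (P {ω | X ω ∈ S}).toReal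
          = ∑ j ∈ S, (n.choose j : ℝ) * p ^ j * (1 - p) ^ (n - j) := htoReal S
        _ ≤ ∑ j ∈ Finset.Ico k0 (n+1), (n.choose j : ℝ) * p ^ j * (1 - p) ^ (n - j) :=
            Finset.sum_le_sum_of_subset_of_nonneg hsub (fun j hj _ => hnonneg j hj)
        _ = ((n.factorial : ℝ) / ((k0-1).factorial * (n-k0).factorial)) *
              ∫ t in (0:ℝ)..p, t ^ (k0-1) * (1 - t) ^ (n - k0) := by
            rw [← sum_binom_eq_integral n k0 hk01 hk0n p]
            exact Finset.sum_congr rfl (fun j _ => by ring)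
        _ ≤ ((n.factorial : ℝ) / ((k0-1).factorial * (n-k0).factorial)) *
              ∫ t in (0:ℝ)..(q k0), t ^ (k0-1) * (1 - t) ^ (n - k0) := by
            have hc0 : (0:ℝ) ≤ (n.factorial : ℝ) / ((k0-1).factorial * (n-k0).factorial) := by
              positivity
            apply mul_le_mul_of_nonneg_left _ hc0
            have hcont : Continuous (fun t : ℝ => t ^ (k0-1) * (1 - t) ^ (n-k0)) :=
              (continuous_pow (k0-1)).mul ((continuous_const.sub continuous_id).pow (n-k0))
            have hi1 : IntervalIntegrable (fun t : ℝ => t ^ (k0-1) * (1 - t) ^ (n-k0)) volume 0 p :=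
              hcont.intervalIntegrable 0 p
            have hi2 : IntervalIntegrable (fun t : ℝ => t ^ (k0-1) * (1 - t) ^ (n-k0)) volume p (q k0) :=
              hcont.intervalIntegrable p (q k0)
            rw [← intervalIntegral.integral_add_adjacent_intervals hi1 hi2]
            have hpos : 0 ≤ ∫ t in p..(q k0), t ^ (k0-1) * (1 - t) ^ (n-k0) := by
              apply intervalIntegral.integral_nonneg (le_of_lt hk0q)
              intro t ht
              have h1 : 0 ≤ t := le_trans (le_of_lt hp.1) ht.1
              have h2 : t ≤ 1 := le_trans ht.2 (le_of_lt hqk0mem.2)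
              have h3 : 0 ≤ 1 - t := by linarith
              exact mul_nonneg (pow_nonneg h1 _) (pow_nonneg h3 _)
            linarith
        _ = δ := hqk0int
  -- combine
  have hP1 : P E + P Eᶜ = 1 := by
    rw [measure_add_measure_compl hEmeas, measure_univ]
  have hEc : (P Eᶜ).toReal ≤ δ := by
    have h1 : P Eᶜ ≤ P {ω | X ω ∈ S} + P ({ω | X ω ∈ Finset.range (n+1)}ᶜ) :=
      le_trans (measure_mono hcompl_sub) (measure_union_le _ _)
    have h2 : P ({ω | X ω ∈ Finset.range (n+1)}ᶜ) = 0 := by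
      have hm : MeasurableSet {ω | X ω ∈ Finset.range (n+1)} := by
        have : {ω | X ω ∈ Finset.range (n+1)} = X ⁻¹' {k | k ∈ Finset.range (n+1)} := rfl
        rw [this]; exact hXmeas trivial
      rw [measure_compl hm (hfin _), hXle, measure_univ, tsub_self]
    rw [h2, add_zero] at h1
    calc (P Eᶜ).toReal ≤ (P {ω | X ω ∈ S}).toReal := ENNReal.toReal_mono (hfin _) h1
      _ ≤ δ := hSbound
  have hadd : (P E).toReal + (P Eᶜ).toReal = 1 := by
    rw [← ENNReal.toReal_add (hfin _) (hfin _), hP1]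
    simp
  linarith
end
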